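/- arXiv:math/0306169 — 6 statements merged into one kernel-verified Lean document; each statement's English description precedes it below -/
import Mathlib

section
/- Let k be a differential field of characteristic zero and let P ∈ k{x} be an irreducible differential polynomial of order N ≥ 0. Define I(P) to be the set of all Q ∈ k{x} such that S_P^m · Q ∈ ⟨P⟩ for some natural number m. Then I(P) is a prime differential ideal of k{x} containing P, I(P) contains no nonzero element of order strictly less than N, and every element of I(P) of order N is a multiple of P. -/
set_option maxHeartbeats 1000000
set_option synthInstance.maxHeartbeats 400000

open MvPolynomial

namespace SepSatAux

variable {k : Type*} [Field k]

lemma supDegree_apply_zero {p : MvPolynomial ℕ k} (hp : p ≠ 0) :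
    (ofLex (AddMonoidAlgebra.supDegree (toLex : (ℕ →₀ ℕ) → Lex (ℕ →₀ ℕ)) p)) 0
      = degreeOf 0 p := by
  obtain ⟨a, ha, he⟩ := AddMonoidAlgebra.exists_supDegree_mem_support
    (toLex : (ℕ →₀ ℕ) → Lex (ℕ →₀ ℕ)) hp
  apply le_antisymm
  · rw [he]
    rw [degreeOf_eq_sup]
    exact Finset.le_sup (f := fun m : ℕ →₀ ℕ => m 0) ha
  · rw [degreeOf_eq_sup]
    apply Finset.sup_le
    intro m hm
    have hle : toLex m ≤ AddMonoidAlgebra.supDegree (toLex : (ℕ →₀ ℕ) → Lex (ℕ →₀ ℕ)) p :=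
      Finset.le_sup hm
    by_contra hcon
    push_neg at hcon
    have hlt : AddMonoidAlgebra.supDegree (toLex : (ℕ →₀ ℕ) → Lex (ℕ →₀ ℕ)) p < toLex m := by
      rw [he]
      refine ⟨0, ?_, ?_⟩
      · intro d hd; exact absurd hd (Nat.not_lt_zero d)
      · rw [he] at hcon; exact hcon
    exact absurd hle (not_le.mpr hlt)

lemma degreeOf_mul_eq'' {p q : MvPolynomial ℕ k} (hp : p ≠ 0) (hq : q ≠ 0) (n : ℕ) :
    degreeOf n (p * q) = degreeOf n p + degreeOf n q := by
  have h0 : ∀ (p q : MvPolynomial ℕ k), p ≠ 0 → q ≠ 0 →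
      degreeOf 0 (p * q) = degreeOf 0 p + degreeOf 0 q := by
    intro p q hp hq
    have hD : Function.Injective (toLex : (ℕ →₀ ℕ) → Lex (ℕ →₀ ℕ)) := toLex.injective
    have hadd : ∀ a b : (ℕ →₀ ℕ), toLex (a + b) = toLex a + toLex b := fun _ _ => rfl
    have hlc : AddMonoidAlgebra.leadingCoeff (toLex : (ℕ →₀ ℕ) → Lex (ℕ →₀ ℕ)) p *
        AddMonoidAlgebra.leadingCoeff (toLex : (ℕ →₀ ℕ) → Lex (ℕ →₀ ℕ)) q ≠ 0 :=
      mul_ne_zero ((AddMonoidAlgebra.leadingCoeff_ne_zero hD).mpr hp)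
        ((AddMonoidAlgebra.leadingCoeff_ne_zero hD).mpr hq)
    have hmul := AddMonoidAlgebra.supDegree_mul hD hadd hlc hp hq
    calc degreeOf 0 (p * q)
        = (ofLex (AddMonoidAlgebra.supDegree (toLex : (ℕ →₀ ℕ) → Lex (ℕ →₀ ℕ)) (p * q))) 0 :=
          (supDegree_apply_zero (mul_ne_zero hp hq)).symm
      _ = (ofLex (AddMonoidAlgebra.supDegree (toLex : (ℕ →₀ ℕ) → Lex (ℕ →₀ ℕ)) p +
            AddMonoidAlgebra.supDegree (toLex : (ℕ →₀ ℕ) → Lex (ℕ →₀ ℕ)) q)) 0 := by rw [hmul]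
      _ = (ofLex (AddMonoidAlgebra.supDegree (toLex : (ℕ →₀ ℕ) → Lex (ℕ →₀ ℕ)) p)) 0 +
            (ofLex (AddMonoidAlgebra.supDegree (toLex : (ℕ →₀ ℕ) → Lex (ℕ →₀ ℕ)) q)) 0 := rfl
      _ = degreeOf 0 p + degreeOf 0 q := by
            rw [supDegree_apply_zero hp, supDegree_apply_zero hq]
  -- now transfer via the swap renaming
  have e := Equiv.swap (0 : ℕ) n
  have hre : ∀ x : MvPolynomial ℕ k,
      degreeOf n x = degreeOf 0 (rename (Equiv.swap (0 : ℕ) n) x) := by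
    intro x
    have := degreeOf_rename_of_injective (p := x)
      (f := (Equiv.swap (0 : ℕ) n)) (Equiv.swap (0 : ℕ) n).injective n
    rw [Equiv.swap_apply_right] at this
    exact this.symm
  have hinj : Function.Injective (rename (R := k) (Equiv.swap (0 : ℕ) n)) :=
    rename_injective _ (Equiv.swap (0 : ℕ) n).injective
  have hp' : rename (Equiv.swap (0 : ℕ) n) p ≠ 0 := fun h => hp (hinj (by simpa using h))
  have hq' : rename (Equiv.swap (0 : ℕ) n) q ≠ 0 := fun h => hq (hinj (by simpa using h))
  rw [hre, hre, hre, map_mul, h0 _ _ hp' hq']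

lemma pderiv_expand {P : MvPolynomial ℕ k} (N : ℕ) :
    pderiv N P = ∑ m ∈ P.support,
      monomial (m - Finsupp.single N 1) (coeff m P * (m N : k)) := by
  conv_lhs => rw [P.as_sum]
  rw [map_sum]
  simp [pderiv_monomial]

lemma pderiv_facts [CharZero k] {P : MvPolynomial ℕ k} {N : ℕ} (h : N ∈ P.vars) :
    pderiv N P ≠ 0 ∧ degreeOf N (pderiv N P) < degreeOf N P := by
  classical
  obtain ⟨m₁, hm₁, hm₁N⟩ := (mem_vars N).mp h
  rw [Finsupp.mem_support_iff] at hm₁N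
  set d := degreeOf N P with hd
  have hd1 : 1 ≤ d := le_trans (Nat.one_le_iff_ne_zero.mpr hm₁N) (monomial_le_degreeOf N hm₁)
  have hsne : P.support.Nonempty := ⟨m₁, hm₁⟩
  obtain ⟨m₀, hm₀, hm₀d⟩ : ∃ m₀ ∈ P.support, (fun m : ℕ →₀ ℕ => m N) m₀ = d := by
    obtain ⟨b, hb, hbe⟩ := Finset.exists_mem_eq_sup P.support hsne (fun m : ℕ →₀ ℕ => m N)
    exact ⟨b, hb, by rw [hd, degreeOf_eq_sup, hbe]⟩
  simp only at hm₀d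
  have hm₀N : 1 ≤ m₀ N := hm₀d ▸ hd1
  have hcoeff : coeff (m₀ - Finsupp.single N 1) (pderiv N P) = coeff m₀ P * (d : k) := by
    rw [pderiv_expand N]
    rw [coeff_sum]
    rw [Finset.sum_eq_single m₀]
    · rw [coeff_monomial, if_pos rfl, hm₀d]
    · intro b hb hbne
      rw [coeff_monomial]
      by_cases hbN : b N = 0
      · split_ifs <;> simp [hbN]
      · rw [if_neg]
        intro hbeq
        apply hbne
        have h1 : b - Finsupp.single N 1 + Finsupp.single N 1 = b :=
          tsub_add_cancel_of_le (Finsupp.single_le_iff.mpr (Nat.one_le_iff_ne_zero.mpr hbN))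
        have h2 : m₀ - Finsupp.single N 1 + Finsupp.single N 1 = m₀ :=
          tsub_add_cancel_of_le (Finsupp.single_le_iff.mpr hm₀N)
        rw [← h1, ← h2, hbeq]
    · intro hc; exact absurd hm₀ hc
  have hcne : coeff (m₀ - Finsupp.single N 1) (pderiv N P) ≠ 0 := by
    rw [hcoeff]
    exact mul_ne_zero (mem_support_iff.mp hm₀)
      (Nat.cast_ne_zero.mpr (by omega))
  constructor
  · intro h0; rw [h0] at hcne; simp at hcne
  · rw [degreeOf_lt_iff (by omega : 0 < d)]
    intro m' hm'
    have hsum : coeff m' (pderiv N P) ≠ 0 := mem_support_iff.mp hm'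
    rw [pderiv_expand N, coeff_sum] at hsum
    obtain ⟨m, hm, hval⟩ := Finset.exists_ne_zero_of_sum_ne_zero hsum
    rw [coeff_monomial] at hval
    have hcond : m - Finsupp.single N 1 = m' := by
      by_contra hc; rw [if_neg hc] at hval; exact hval rfl
    have hmN : m N ≠ 0 := by
      intro h0; rw [if_pos hcond] at hval; simp [h0] at hval
    have hmNd : m N ≤ d := monomial_le_degreeOf N hm
    have : m' N = m N - 1 := by
      rw [← hcond, Finsupp.tsub_apply, Finsupp.single_eq_same]
    omega

lemma pderiv_supported {s : Set ℕ} {Q : MvPolynomial ℕ k} (n : ℕ)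
    (hQ : Q ∈ supported k s) : pderiv n Q ∈ supported k s := by
  refine Algebra.adjoin_induction
    (p := fun q _ => pderiv n q ∈ supported k s) ?_ ?_ ?_ ?_ hQ
  · rintro x ⟨i, hi, rfl⟩
    by_cases hin : i = n
    · subst hin; rw [pderiv_X_self]; exact one_mem _
    · rw [pderiv_X_of_ne hin]; exact zero_mem _
  · intro r
    have : (algebraMap k (MvPolynomial ℕ k)) r = C r := rfl
    rw [this, pderiv_C]; exact zero_mem _
  · intro x y _ _ ihx ihy
    rw [map_add]; exact add_mem ihx ihy
  · intro x y hx hy ihx ihy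
    rw [pderiv_mul]
    exact add_mem (mul_mem ihx hy) (mul_mem hx ihy)

section Deriv

variable (D : MvPolynomial ℕ k → MvPolynomial ℕ k)
  (hDadd : ∀ p q, D (p + q) = D p + D q)
  (hDmul : ∀ p q, D (p * q) = p * D q + q * D p)
  (δ : k → k) (hDC : ∀ a : k, D (C a) = C (δ a))
  (hDX : ∀ n : ℕ, D (X n) = X (n + 1))

include hDadd hDmul hDC hDX

lemma key_deriv (M : ℕ) {Q : MvPolynomial ℕ k}
    (hQ : Q ∈ supported k {i : ℕ | i < M + 1}) :
    D Q - X (M + 1) * pderiv M Q ∈ supported k {i : ℕ | i < M + 1} := by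
  refine Algebra.adjoin_induction
    (p := fun q _ => D q - X (M + 1) * pderiv M q ∈ supported k {i : ℕ | i < M + 1})
    ?_ ?_ ?_ ?_ hQ
  · rintro x ⟨i, hi, rfl⟩
    simp only [Set.mem_setOf_eq] at hi
    by_cases him : i = M
    · subst him
      rw [hDX, pderiv_X_self, mul_one, sub_self]
      exact zero_mem _
    · rw [hDX, pderiv_X_of_ne him, mul_zero, sub_zero]
      exact X_mem_supported.mpr (by simp only [Set.mem_setOf_eq]; omega)
  · intro r
    have h1 : (algebraMap k (MvPolynomial ℕ k)) r = C r := rfl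
    rw [h1, hDC, pderiv_C, mul_zero, sub_zero]
    exact Subalgebra.algebraMap_mem _ (δ r)
  · intro x y _ _ ihx ihy
    have : D (x + y) - X (M + 1) * pderiv M (x + y)
        = (D x - X (M + 1) * pderiv M x) + (D y - X (M + 1) * pderiv M y) := by
      rw [hDadd, map_add]; ring
    rw [this]; exact add_mem ihx ihy
  · intro x y hx hy ihx ihy
    have : D (x * y) - X (M + 1) * pderiv M (x * y)
        = x * (D y - X (M + 1) * pderiv M y) + y * (D x - X (M + 1) * pderiv M x) := by
      rw [hDmul, pderiv_mul]; ring
    rw [this]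
    exact add_mem (mul_mem hx ihy) (mul_mem hy ihx)

lemma D_supported (M : ℕ) {Q : MvPolynomial ℕ k}
    (hQ : Q ∈ supported k {i : ℕ | i < M + 1}) :
    D Q ∈ supported k {i : ℕ | i < M + 2} := by
  have h1 := key_deriv D hDadd hDmul δ hDC hDX M hQ
  have h2 : D Q = (D Q - X (M + 1) * pderiv M Q) + X (M + 1) * pderiv M Q := by ring
  rw [h2]
  have hsub : supported k {i : ℕ | i < M + 1} ≤ supported k {i : ℕ | i < M + 2} :=
    supported_mono (fun i (hi : i < M + 1) => by simp only [Set.mem_setOf_eq]; omega)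
  exact add_mem (hsub h1)
    (mul_mem (X_mem_supported.mpr (by simp only [Set.mem_setOf_eq]; omega))
      (hsub (pderiv_supported M hQ)))

end Deriv

noncomputable def subSol {K : Type*} [Field K] (f : k →+* K) (base : ℕ → K)
    (T : ℕ → MvPolynomial ℕ k) (Sden : K) (N : ℕ) : ℕ → K := fun v =>
  if v ≤ N then base v
  else (MvPolynomial.eval₂ f
      (fun n => if h : n < v then subSol f base T Sden N n else 0) (T v)) / Sden
termination_by v => v

end SepSatAux

/-- For an irreducible differential polynomial `P` of order `N ≥ 0` in the
differential polynomial ring `k{x}` (modelled as `MvPolynomial ℕ k`, where the variable `n`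
stands for `x^(n)`, with derivation `D` extending the derivation `δ` of `k` and sending
`x^(n)` to `x^(n+1)`), the set
`I(P) = {Q | ∃ m, S_P ^ m * Q ∈ ⟨P⟩}` (where `S_P = ∂P/∂x^(N)` is the separant and `⟨P⟩`
is the smallest differential ideal containing `P`, i.e. the ideal spanned by the iterated
derivatives of `P`) is a prime differential ideal containing `P`, containing no nonzero
element of order `< N`, and every element of it of order `N` is a multiple of `P`. -/
theorem separant_saturation_is_prime_differential_ideal
    {k : Type*} [Field k] [CharZero k]
    (δ : k → k)
    (hδadd : ∀ x y, δ (x + y) = δ x + δ y)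
    (hδmul : ∀ x y, δ (x * y) = x * δ y + y * δ x)
    (D : MvPolynomial ℕ k → MvPolynomial ℕ k)
    (hDadd : ∀ p q, D (p + q) = D p + D q)
    (hDmul : ∀ p q, D (p * q) = p * D q + q * D p)
    (hDC : ∀ a : k, D (C a) = C (δ a))
    (hDX : ∀ n : ℕ, D (X n) = X (n + 1))
    (P : MvPolynomial ℕ k) (hPirr : Irreducible P)
    (N : ℕ) (hord : N ∈ P.vars) (hordmax : ∀ m ∈ P.vars, m ≤ N) :
    ∃ I : Ideal (MvPolynomial ℕ k),
      (I : Set (MvPolynomial ℕ k)) =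
        {Q | ∃ m : ℕ, (pderiv N P) ^ m * Q ∈ Ideal.span {R | ∃ j : ℕ, R = D^[j] P}} ∧
      I.IsPrime ∧
      (∀ Q ∈ I, D Q ∈ I) ∧
      P ∈ I ∧
      (∀ Q ∈ I, (∀ m ∈ Q.vars, m < N) → Q = 0) ∧
      (∀ Q ∈ I, N ∈ Q.vars → (∀ m ∈ Q.vars, m ≤ N) → P ∣ Q) := by
  classical
  set S : MvPolynomial ℕ k := pderiv N P with hSdef
  set Ispan : Ideal (MvPolynomial ℕ k) := Ideal.span {R | ∃ j : ℕ, R = D^[j] P} with hIspandef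
  -- basic facts
  have hSfacts := SepSatAux.pderiv_facts hord
  rw [← hSdef] at hSfacts
  have hSne : S ≠ 0 := hSfacts.1
  have hP0 : P ≠ 0 := fun h => by simp [h] at hord
  have hPprime : Prime P := (UniqueFactorizationMonoid.irreducible_iff_prime).mp hPirr
  have hPS : ¬ P ∣ S := by
    rintro ⟨R, hR⟩
    have hRne : R ≠ 0 := fun h => hSne (by rw [hR, h, mul_zero])
    have hmul := SepSatAux.degreeOf_mul_eq'' hP0 hRne N
    rw [← hR] at hmul
    have h2 := hSfacts.2
    omega
  have hPmemspan : P ∈ Ispan := Ideal.subset_span ⟨0, rfl⟩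
  have hPsup : P ∈ supported k {i : ℕ | i < N + 1} := by
    rw [mem_supported]
    intro i hi
    have := hordmax i (Finset.mem_coe.mp hi)
    simp only [Set.mem_setOf_eq]; omega
  have hSsup : S ∈ supported k {i : ℕ | i < N + 1} := by
    rw [hSdef]; exact SepSatAux.pderiv_supported N hPsup
  have hsubmono : ∀ {M M' : ℕ}, M ≤ M' →
      ∀ {q : MvPolynomial ℕ k}, q ∈ supported k {i : ℕ | i < M} →
        q ∈ supported k {i : ℕ | i < M'} := by
    intro M M' h q hq
    exact supported_mono (fun i (hi : i < M) => by simp only [Set.mem_setOf_eq]; omega) hq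
  have hsupcast : ∀ (a b : ℕ), a = b → ∀ {q : MvPolynomial ℕ k},
      q ∈ supported k {i : ℕ | i < a} → q ∈ supported k {i : ℕ | i < b} := by
    rintro a b rfl q hq; exact hq
  -- elementary facts about D
  have hD0 : D 0 = 0 := by
    have h := hDadd 0 0
    rw [add_zero] at h
    have h2 : D 0 + 0 = D 0 + D 0 := by rw [add_zero]; exact h
    exact (add_left_cancel h2).symm
  have hDsub : ∀ p q, D (p - q) = D p - D q := by
    intro p q
    have h := hDadd (p - q) q
    rw [sub_add_cancel] at h
    rw [h]; ring
  have hDpow : ∀ (p : MvPolynomial ℕ k) (m : ℕ),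
      D (p ^ (m + 1)) = ((m + 1 : ℕ) : MvPolynomial ℕ k) * p ^ m * D p := by
    intro p m
    induction m with
    | zero => simp [pow_one]
    | succ m ih =>
      have h1 : p ^ (m + 2) = p * p ^ (m + 1) := by ring
      rw [h1, hDmul, ih]
      push_cast
      ring
  -- the structure of the iterated derivatives of P
  have hT : ∀ j : ℕ, S * X (N + 1 + j) - D^[j + 1] P ∈ supported k {i : ℕ | i < N + 1 + j} := by
    intro j
    induction j with
    | zero =>
      have h1 := SepSatAux.key_deriv D hDadd hDmul δ hDC hDX N hPsup
      rw [← hSdef] at h1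
      have h2 : S * X (N + 1 + 0) - D^[0 + 1] P = -(D P - X (N + 1) * S) := by
        have hit : D^[0 + 1] P = D P := by rw [Function.iterate_one]
        have hX : (X (N + 1 + 0) : MvPolynomial ℕ k) = X (N + 1) := rfl
        rw [hit, hX]; ring
      rw [h2]
      exact hsupcast (N + 1) (N + 1 + 0) (by omega) (neg_mem h1)
    | succ j ih =>
      have hD2 : D^[(j + 1) + 1] P = D (D^[j + 1] P) := Function.iterate_succ_apply' D (j + 1) P
      have hDS : D S ∈ supported k {i : ℕ | i < N + 2} :=
        SepSatAux.D_supported D hDadd hDmul δ hDC hDX N hSsup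
      have hDT : D (S * X (N + 1 + j) - D^[j + 1] P) ∈ supported k {i : ℕ | i < N + j + 2} :=
        SepSatAux.D_supported D hDadd hDmul δ hDC hDX (N + j)
          (hsupcast (N + 1 + j) (N + j + 1) (by omega) ih)
      have hgoal : S * X (N + 1 + (j + 1)) - D^[(j + 1) + 1] P
          = D (S * X (N + 1 + j) - D^[j + 1] P) - X (N + 1 + j) * D S := by
        have hX : (X (N + 1 + (j + 1)) : MvPolynomial ℕ k) = X (N + 1 + j + 1) := rfl
        rw [hD2, hDsub, hDmul, hDX, hX]
        ring
      rw [hgoal]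
      refine sub_mem (hsupcast (N + j + 2) (N + 1 + (j + 1)) (by omega) hDT) ?_
      exact mul_mem (X_mem_supported.mpr (by simp only [Set.mem_setOf_eq]; omega))
        (hsubmono (by omega) hDS)
  -- the reduction lemma
  have hred : ∀ r : ℕ, ∀ Q, Q ∈ supported k {i : ℕ | i < N + 1 + r} →
      ∃ t : ℕ, ∃ Q', Q' ∈ supported k {i : ℕ | i < N + 1} ∧ S ^ t * Q - Q' ∈ Ispan := by
    intro r
    induction r with
    | zero =>
      intro Q hQ
      exact ⟨0, Q, hsupcast (N + 1 + 0) (N + 1) (by omega) hQ, by simp⟩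
    | succ r ih =>
      intro Q hQ
      refine Algebra.adjoin_induction
        (p := fun q _ => ∃ t : ℕ, ∃ Q', Q' ∈ supported k {i : ℕ | i < N + 1} ∧
          S ^ t * q - Q' ∈ Ispan) ?_ ?_ ?_ ?_ hQ
      · rintro x ⟨i, hi, rfl⟩
        simp only [Set.mem_setOf_eq] at hi
        by_cases hiN : i ≤ N
        · exact ⟨0, X i, X_mem_supported.mpr (by simp only [Set.mem_setOf_eq]; omega), by simp⟩
        · obtain ⟨j, rfl⟩ : ∃ j, i = N + 1 + j := ⟨i - (N + 1), by omega⟩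
          have hTj' : S * X (N + 1 + j) - D^[j + 1] P ∈ supported k {i : ℕ | i < N + 1 + r} :=
            hsubmono (by omega) (hT j)
          obtain ⟨u, T', hT', hTs⟩ := ih _ hTj'
          refine ⟨u + 1, T', hT', ?_⟩
          have hident : S ^ (u + 1) * X (N + 1 + j) - T'
              = S ^ u * D^[j + 1] P + (S ^ u * (S * X (N + 1 + j) - D^[j + 1] P) - T') := by
            ring
          rw [hident]
          exact add_mem (Ideal.mul_mem_left _ _ (Ideal.subset_span ⟨j + 1, rfl⟩)) hTs
      · intro a
        exact ⟨0, algebraMap k _ a, Subalgebra.algebraMap_mem _ a, by simp⟩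
      · rintro x y _ _ ⟨t1, x', hx', hxs⟩ ⟨t2, y', hy', hys⟩
        refine ⟨t1 + t2, S ^ t2 * x' + S ^ t1 * y',
          add_mem (mul_mem (pow_mem hSsup t2) hx') (mul_mem (pow_mem hSsup t1) hy'), ?_⟩
        have hident : S ^ (t1 + t2) * (x + y) - (S ^ t2 * x' + S ^ t1 * y')
            = S ^ t2 * (S ^ t1 * x - x') + S ^ t1 * (S ^ t2 * y - y') := by ring
        rw [hident]
        exact add_mem (Ideal.mul_mem_left _ _ hxs) (Ideal.mul_mem_left _ _ hys)
      · rintro x y _ _ ⟨t1, x', hx', hxs⟩ ⟨t2, y', hy', hys⟩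
        refine ⟨t1 + t2, x' * y', mul_mem hx' hy', ?_⟩
        have hident : S ^ (t1 + t2) * (x * y) - x' * y'
            = (S ^ t2 * y) * (S ^ t1 * x - x') + x' * (S ^ t2 * y - y') := by ring
        rw [hident]
        exact add_mem (Ideal.mul_mem_left _ _ hxs) (Ideal.mul_mem_left _ _ hys)
  -- the generic solution in the fraction field of the quotient
  have hJprime : (Ideal.span {P}).IsPrime := (Ideal.span_singleton_prime hP0).mpr hPprime
  haveI := hJprime
  set ψ : MvPolynomial ℕ k →+*
      FractionRing (MvPolynomial ℕ k ⧸ Ideal.span {P}) :=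
    (algebraMap (MvPolynomial ℕ k ⧸ Ideal.span {P})
      (FractionRing (MvPolynomial ℕ k ⧸ Ideal.span {P}))).comp
      (Ideal.Quotient.mk (Ideal.span {P})) with hψdef
  have hψ0 : ∀ q, ψ q = 0 ↔ P ∣ q := by
    intro q
    rw [hψdef, RingHom.comp_apply,
      map_eq_zero_iff _ (IsFractionRing.injective (MvPolynomial ℕ k ⧸ Ideal.span {P})
        (FractionRing (MvPolynomial ℕ k ⧸ Ideal.span {P}))),
      Ideal.Quotient.eq_zero_iff_mem, Ideal.mem_span_singleton]
  have hψS : ψ S ≠ 0 := fun h => hPS ((hψ0 S).mp h)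
  set Tf : ℕ → MvPolynomial ℕ k := fun v => S * X v - D^[v - N] P with hTfdef
  set s := SepSatAux.subSol (ψ.comp C) (fun v => ψ (X v)) Tf (ψ S) N with hsdef
  set e := eval₂Hom (ψ.comp C) s with hedef
  have hcongr : ∀ (v : ℕ) (q : MvPolynomial ℕ k), q ∈ supported k {i : ℕ | i < v} →
      eval₂ (ψ.comp C) (fun n => if _ : n < v then s n else 0) q = e q := by
    intro v q hq
    apply eval₂_congr
    intro i c hic hcoef
    have hiv : i ∈ q.vars := (mem_vars i).mpr ⟨c, mem_support_iff.mpr hcoef, hic⟩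
    have hlt : i < v := mem_supported.mp hq (Finset.mem_coe.mpr hiv)
    rw [dif_pos hlt]
  have hsv : ∀ v, N < v → s v = e (Tf v) / ψ S := by
    intro v hv
    have h1 : s v = if v ≤ N then ψ (X v)
        else eval₂ (ψ.comp C) (fun n => if _ : n < v then s n else 0) (Tf v) / ψ S := by
      rw [hsdef]
      rw [SepSatAux.subSol]
    rw [h1, if_neg (by omega)]
    congr 1
    apply hcongr
    obtain ⟨j, rfl⟩ : ∃ j, v = N + 1 + j := ⟨v - (N + 1), by omega⟩
    have harith : (N + 1 + j) - N = j + 1 := by omega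
    show S * X (N + 1 + j) - D^[(N + 1 + j) - N] P ∈ _
    rw [harith]
    exact hT j
  have hsbase : ∀ v, v ≤ N → s v = ψ (X v) := by
    intro v hv
    rw [hsdef, SepSatAux.subSol, if_pos hv]
  have hlow : ∀ q ∈ supported k {i : ℕ | i < N + 1}, e q = ψ q := by
    intro q hq
    refine Algebra.adjoin_induction (p := fun q _ => e q = ψ q) ?_ ?_ ?_ ?_ hq
    · rintro x ⟨i, hi, rfl⟩
      simp only [Set.mem_setOf_eq] at hi
      have h1 : e (X i) = s i := eval₂Hom_X' _ _ _
      rw [h1]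
      exact hsbase i (by omega)
    · intro a
      have h1 : (algebraMap k (MvPolynomial ℕ k)) a = C a := rfl
      rw [h1]
      show (eval₂Hom (ψ.comp C) s) (C a) = ψ (C a)
      rw [eval₂Hom_C]
      rfl
    · intro x y _ _ ihx ihy
      rw [map_add e x y, map_add ψ x y, ihx, ihy]
    · intro x y _ _ ihx ihy
      rw [map_mul e x y, map_mul ψ x y, ihx, ihy]
  have heP : ∀ j : ℕ, e (D^[j] P) = 0 := by
    intro j
    cases j with
    | zero =>
      rw [Function.iterate_zero_apply, hlow P hPsup]
      exact (hψ0 P).mpr dvd_rfl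
    | succ j =>
      have h1 : (D^[j + 1] P : MvPolynomial ℕ k)
          = S * X (N + 1 + j) - (S * X (N + 1 + j) - D^[j + 1] P) := by ring
      rw [h1, map_sub, map_mul]
      have heS : e S = ψ S := hlow S hSsup
      have heX : e (X (N + 1 + j)) = s (N + 1 + j) := eval₂Hom_X' _ _ _
      have hTfv : Tf (N + 1 + j) = S * X (N + 1 + j) - D^[j + 1] P := by
        rw [hTfdef]
        have harith : (N + 1 + j) - N = j + 1 := by omega
        show S * X (N + 1 + j) - D^[(N + 1 + j) - N] P = _
        rw [harith]
      rw [heS, heX, hsv (N + 1 + j) (by omega), hTfv]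
      have h2 : ψ S * ((e (S * X (N + 1 + j) - D^[j + 1] P)) / ψ S)
          = e (S * X (N + 1 + j) - D^[j + 1] P) := by
        field_simp
      rw [h2, sub_self]
  have hIspan0 : ∀ q ∈ Ispan, e q = 0 := by
    intro q hq
    refine Submodule.span_induction ?_ ?_ ?_ ?_ hq
    · rintro x ⟨j, rfl⟩; exact heP j
    · exact map_zero e
    · intro x y _ _ ihx ihy; rw [map_add, ihx, ihy, add_zero]
    · intro a x _ ih
      rw [smul_eq_mul, map_mul, ih, mul_zero]
  have hdvd : ∀ q ∈ supported k {i : ℕ | i < N + 1},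
      (∃ m : ℕ, S ^ m * q ∈ Ispan) → P ∣ q := by
    rintro q hq ⟨m, hm⟩
    have h0 : e (S ^ m * q) = 0 := hIspan0 _ hm
    rw [map_mul, map_pow, hlow S hSsup, hlow q hq] at h0
    rcases mul_eq_zero.mp h0 with h | h
    · exact absurd h (pow_ne_zero m hψS)
    · exact (hψ0 q).mp h
  have hfin : ∀ Q : MvPolynomial ℕ k, ∃ r : ℕ, Q ∈ supported k {i : ℕ | i < N + 1 + r} := by
    intro Q
    refine ⟨Q.vars.sup id + 1, mem_supported.mpr ?_⟩
    intro i hi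
    have h1 : i ≤ Q.vars.sup id := Finset.le_sup (f := id) (Finset.mem_coe.mp hi)
    simp only [Set.mem_setOf_eq]; omega
  have hIspanD : ∀ q ∈ Ispan, D q ∈ Ispan := by
    intro q hq
    refine Submodule.span_induction ?_ ?_ ?_ ?_ hq
    · rintro x ⟨j, rfl⟩
      have h1 : D (D^[j] P) = D^[j + 1] P := (Function.iterate_succ_apply' D j P).symm
      rw [h1]
      exact Ideal.subset_span ⟨j + 1, rfl⟩
    · rw [hD0]; exact zero_mem _
    · intro x y _ _ ihx ihy; rw [hDadd]; exact add_mem ihx ihy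
    · intro a x hx ih
      rw [smul_eq_mul, hDmul]
      exact add_mem (Ideal.mul_mem_left _ _ ih) (Ideal.mul_mem_right _ _ hx)
  -- the saturation ideal
  refine ⟨{ carrier := {Q | ∃ m : ℕ, S ^ m * Q ∈ Ispan}
            add_mem' := ?_
            zero_mem' := ⟨0, by simpa using zero_mem Ispan⟩
            smul_mem' := ?_ }, rfl, ?_, ?_, ?_, ?_, ?_⟩
  · rintro a b ⟨m1, h1⟩ ⟨m2, h2⟩
    refine ⟨m1 + m2, ?_⟩
    have hident : S ^ (m1 + m2) * (a + b)
        = S ^ m2 * (S ^ m1 * a) + S ^ m1 * (S ^ m2 * b) := by ring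
    rw [hident]
    exact add_mem (Ideal.mul_mem_left _ _ h1) (Ideal.mul_mem_left _ _ h2)
  · rintro c x ⟨m, hm⟩
    refine ⟨m, ?_⟩
    rw [smul_eq_mul]
    have hident : S ^ m * (c * x) = c * (S ^ m * x) := by ring
    rw [hident]
    exact Ideal.mul_mem_left _ _ hm
  -- primality
  · constructor
    · intro htop
      have h1 : (1 : MvPolynomial ℕ k) ∈
          ({Q | ∃ m : ℕ, S ^ m * Q ∈ Ispan} : Set (MvPolynomial ℕ k)) := by
        rw [show ((1 : MvPolynomial ℕ k) ∈ {Q | ∃ m : ℕ, S ^ m * Q ∈ Ispan}) =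
          ((1 : MvPolynomial ℕ k) ∈ (⊤ : Ideal (MvPolynomial ℕ k))) from by rw [← htop]; rfl]
        trivial
      obtain ⟨m, hm⟩ := h1
      rw [mul_one] at hm
      have h2 := hIspan0 _ hm
      rw [map_pow, hlow S hSsup] at h2
      exact pow_ne_zero m hψS h2
    · intro x y hxy
      obtain ⟨m, hm⟩ := hxy
      obtain ⟨r1, hx1⟩ := hfin x
      obtain ⟨r2, hy1⟩ := hfin y
      obtain ⟨t1, x', hx', hxs⟩ := hred (max r1 r2) x (hsubmono (by omega) hx1)
      obtain ⟨t2, y', hy', hys⟩ := hred (max r1 r2) y (hsubmono (by omega) hy1)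
      have hkey : S ^ m * (x' * y') ∈ Ispan := by
        have hident : S ^ m * (x' * y')
            = S ^ t1 * S ^ t2 * (S ^ m * (x * y))
              - S ^ m * S ^ t2 * y * (S ^ t1 * x - x')
              - S ^ m * x' * (S ^ t2 * y - y') := by ring
        rw [hident]
        exact sub_mem (sub_mem (Ideal.mul_mem_left _ _ hm) (Ideal.mul_mem_left _ _ hxs))
          (Ideal.mul_mem_left _ _ hys)
      have hdvdxy : P ∣ x' * y' := hdvd _ (mul_mem hx' hy') ⟨m, hkey⟩
      rcases hPprime.2.2 _ _ hdvdxy with h | h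
      · left
        obtain ⟨V, hV⟩ := h
        refine ⟨t1, ?_⟩
        have h3 : S ^ t1 * x = (S ^ t1 * x - x') + P * V := by rw [← hV]; ring
        rw [h3]
        exact add_mem hxs (Ideal.mul_mem_right _ _ hPmemspan)
      · right
        obtain ⟨V, hV⟩ := h
        refine ⟨t2, ?_⟩
        have h3 : S ^ t2 * y = (S ^ t2 * y - y') + P * V := by rw [← hV]; ring
        rw [h3]
        exact add_mem hys (Ideal.mul_mem_right _ _ hPmemspan)
  -- stability under D
  · intro Q hQ
    obtain ⟨m, hm⟩ := hQ
    cases m with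
    | zero =>
      rw [pow_zero, one_mul] at hm
      exact ⟨0, by rw [pow_zero, one_mul]; exact hIspanD _ hm⟩
    | succ m =>
      have h1 : D (S ^ (m + 1) * Q) ∈ Ispan := hIspanD _ hm
      refine ⟨m + 2, ?_⟩
      have hident : S ^ (m + 2) * D Q
          = S * D (S ^ (m + 1) * Q)
            - ((m + 1 : ℕ) : MvPolynomial ℕ k) * D S * (S ^ (m + 1) * Q) := by
        rw [hDmul, hDpow]
        push_cast
        ring
      rw [hident]
      exact sub_mem (Ideal.mul_mem_left _ _ h1) (Ideal.mul_mem_left _ _ hm)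
  -- P is a member
  · exact ⟨0, by rw [pow_zero, one_mul]; exact hPmemspan⟩
  -- no nonzero element of order < N
  · intro Q hQ hvars
    obtain ⟨m, hm⟩ := hQ
    by_contra hQ0
    have hQsup : Q ∈ supported k {i : ℕ | i < N + 1} := by
      rw [mem_supported]; intro i hi
      have := hvars i (Finset.mem_coe.mp hi)
      simp only [Set.mem_setOf_eq]; omega
    have hPQ : P ∣ Q := hdvd _ hQsup ⟨m, hm⟩
    have hNQ : N ∉ Q.vars := fun h => lt_irrefl N (hvars N h)
    have hpd : pderiv N Q = 0 := pderiv_eq_zero_of_notMem_vars hNQ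
    have hpow : ∀ n : ℕ, P ^ n ∣ Q := by
      intro n
      induction n with
      | zero => simpa using one_dvd Q
      | succ n ih =>
        cases n with
        | zero => simpa [pow_one] using hPQ
        | succ n =>
          obtain ⟨R, hR⟩ := ih
          have hd : (0 : MvPolynomial ℕ k) = pderiv N (P ^ (n + 1) * R) := by
            rw [← hR, hpd]
          rw [pderiv_mul, pderiv_pow, ← hSdef] at hd
          have hd2 : (0 : MvPolynomial ℕ k)
              = P ^ n * (((n + 1 : ℕ) : MvPolynomial ℕ k) * S * R + P * pderiv N R) := by
            rw [hd]
            have harith : (n + 1) - 1 = n := by omega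
            rw [harith]
            push_cast
            ring
          have h3 : ((n + 1 : ℕ) : MvPolynomial ℕ k) * S * R + P * pderiv N R = 0 := by
            rcases mul_eq_zero.mp hd2.symm with h | h
            · exact absurd h (pow_ne_zero n hP0)
            · exact h
          have h4 : P ∣ ((n + 1 : ℕ) : MvPolynomial ℕ k) * S * R :=
            ⟨-(pderiv N R), by linear_combination h3⟩
          rcases hPprime.2.2 _ _ h4 with h5 | h5
          · exfalso
            rcases hPprime.2.2 _ _ h5 with h6 | h6
            · have hunit : IsUnit ((n + 1 : ℕ) : MvPolynomial ℕ k) := by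
                rw [← map_natCast (C : k →+* MvPolynomial ℕ k) (n + 1)]
                exact IsUnit.map C
                  (isUnit_iff_ne_zero.mpr (Nat.cast_ne_zero.mpr (Nat.succ_ne_zero n)))
              exact hPirr.not_isUnit (isUnit_of_dvd_unit h6 hunit)
            · exact hPS h6
          · obtain ⟨R', hR'⟩ := h5
            exact ⟨R', by rw [hR, hR']; ring⟩
    obtain ⟨n, hn⟩ := FiniteMultiplicity.of_not_isUnit hPirr.not_isUnit hQ0
    exact hn (hpow (n + 1))
  -- every element of order N is a multiple of P
  · intro Q hQ _ hvars
    obtain ⟨m, hm⟩ := hQ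
    refine hdvd _ ?_ ⟨m, hm⟩
    rw [mem_supported]; intro i hi
    have := hvars i (Finset.mem_coe.mp hi)
    simp only [Set.mem_setOf_eq]; omega
end

section
/- Let k be a differential field of characteristic zero. Every nonzero proper prime differential ideal of the differential polynomial ring k{x} is of the form I(P) for some irreducible differential polynomial P ∈ k{x}, where I(P) is the set of all Q ∈ k{x} such that S_P^m · Q ∈ ⟨P⟩ for some natural number m. -/
open MvPolynomial

namespace RittAux

variable {k : Type*} [Field k]

local notation "R" => MvPolynomial ℕ k

lemma mem_vars_iff_degreeOf_ne_zero (v : ℕ) (f : R) :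
    v ∈ f.vars ↔ degreeOf v f ≠ 0 := by
  rw [mem_vars]
  constructor
  · rintro ⟨s, hs, hv⟩
    have := monomial_le_degreeOf v hs
    have := Finsupp.mem_support_iff.mp hv
    omega
  · intro h
    have : ¬ degreeOf v f ≤ 0 := by omega
    rw [degreeOf_le_iff] at this
    push_neg at this
    obtain ⟨s, hs, hv⟩ := this
    exact ⟨s, hs, Finsupp.mem_support_iff.mpr (by omega)⟩

lemma degreeOf_X_pow_le (v : ℕ) (e : ℕ) : degreeOf v ((X v : R) ^ e) ≤ e := by
  rw [X_pow_eq_monomial, degreeOf_monomial_eq _ _ (one_ne_zero), Finsupp.single_apply]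
  simp

lemma vars_monomial_subset (s : ℕ →₀ ℕ) (c : k) :
    (monomial s c : R).vars ⊆ s.support := by
  rcases eq_or_ne c 0 with rfl | hc
  · simp
  · rw [vars_monomial hc]

lemma degreeOf_monomial_le (v : ℕ) (s : ℕ →₀ ℕ) (c : k) :
    degreeOf v (monomial s c : R) ≤ s v := by
  rw [degreeOf_le_iff]
  intro m hm
  have := support_monomial_subset (s := s) (a := c) hm
  rw [Finset.mem_singleton] at this
  rw [this]

/-- Decomposition of `Q` at its top degree `d ≥ 1` in the variable `v`. -/
lemma decomp_pos (v : ℕ) (Q : R) (d : ℕ) (hd : degreeOf v Q = d) (h1 : 1 ≤ d) :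
    ∃ lead rest : R, Q = lead * X v ^ d + rest ∧ degreeOf v lead = 0 ∧ lead ≠ 0 ∧
      degreeOf v rest < d ∧ lead.vars ⊆ Q.vars := by
  classical
  set F := Q.support.filter (fun s => s v = d) with hF
  refine ⟨∑ s ∈ F, monomial (s.erase v) (coeff s Q),
    ∑ s ∈ Q.support.filter (fun s => ¬ s v = d), monomial s (coeff s Q), ?_, ?_, ?_, ?_, ?_⟩
  · have h2 : (∑ s ∈ F, monomial (s.erase v) (coeff s Q)) * X v ^ d
        = ∑ s ∈ F, monomial s (coeff s Q) := by
      rw [Finset.sum_mul]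
      refine Finset.sum_congr rfl fun s hs => ?_
      rw [hF, Finset.mem_filter] at hs
      rw [X_pow_eq_monomial, monomial_mul, mul_one, ← hs.2, Finsupp.erase_add_single]
    rw [h2, hF, Finset.sum_filter_add_sum_filter_not Q.support (fun s => s v = d)
      (fun s => monomial s (coeff s Q)), support_sum_monomial_coeff Q]
  · refine Nat.le_antisymm (le_trans (degreeOf_sum_le _ _ _) ?_) (Nat.zero_le _)
    refine Finset.sup_le fun s hs => ?_
    refine le_trans (degreeOf_monomial_le _ _ _) ?_
    simp [Finsupp.erase_same]
  · have hQ0 : Q ≠ 0 := by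
      intro h; rw [h, degreeOf_zero] at hd; omega
    obtain ⟨s0, hs0, hsup⟩ := Finset.exists_mem_eq_sup Q.support
      (support_nonempty.mpr hQ0) (fun m : ℕ →₀ ℕ => m v)
    have hs0v : s0 v = d := by rw [degreeOf_eq_sup] at hd; omega
    intro h0
    have : coeff (s0.erase v) (∑ s ∈ F, (monomial (Finsupp.erase v s)) (coeff s Q)) = coeff s0 Q := by
      rw [coeff_sum]
      rw [Finset.sum_eq_single s0]
      · simp [coeff_monomial]
      · intro s hs hne
        rw [coeff_monomial, if_neg]
        intro heq
        apply hne
        rw [hF, Finset.mem_filter] at hs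
        ext w
        rcases eq_or_ne w v with rfl | hw
        · rw [hs.2, hs0v]
        · have := DFunLike.congr_fun heq w
          rwa [Finsupp.erase_ne hw, Finsupp.erase_ne hw] at this
      · intro hnot
        exact absurd (by rw [hF, Finset.mem_filter]; exact ⟨hs0, hs0v⟩) hnot
    rw [h0] at this
    simp only [coeff_zero] at this
    exact (mem_support_iff.mp hs0) this.symm
  · refine lt_of_le_of_lt (degreeOf_sum_le _ _ _) ?_
    rw [Finset.sup_lt_iff (by rw [Nat.bot_eq_zero]; omega : (⊥:ℕ) < d)]
    intro s hs
    rw [Finset.mem_filter] at hs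
    refine lt_of_le_of_lt (degreeOf_monomial_le _ _ _) ?_
    have := monomial_le_degreeOf v hs.1
    omega
  · intro x hx
    have := vars_sum_subset F (fun s => (monomial (Finsupp.erase v s)) (coeff s Q)) hx
    rw [Finset.mem_biUnion] at this
    obtain ⟨s, hsF, hxs⟩ := this
    have hxs2 := vars_monomial_subset _ _ hxs
    rw [Finsupp.support_erase, Finset.mem_erase] at hxs2
    rw [hF, Finset.mem_filter] at hsF
    exact (mem_vars x).mpr ⟨s, hsF.1, hxs2.2⟩

lemma degreeOf_lead_eq (v m : ℕ) (c r : R) (hc : degreeOf v c = 0) (hc0 : c ≠ 0)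
    (hr : r = 0 ∨ degreeOf v r < m) : degreeOf v (c * X v ^ m + r) = m := by
  refine Nat.le_antisymm ?_ ?_
  · refine le_trans (degreeOf_add_le _ _ _) ?_
    have h1 : degreeOf v (c * X v ^ m) ≤ m := by
      refine le_trans (degreeOf_mul_le _ _ _) ?_
      have := degreeOf_X_pow_le (k := k) v m
      omega
    rcases hr with rfl | hr
    · simpa using h1
    · have : degreeOf v r ≤ m := le_of_lt hr
      omega
  · obtain ⟨s, hs⟩ := exists_coeff_ne_zero hc0
    have hsv : s v = 0 := by
      have := monomial_le_degreeOf v (mem_support_iff.mpr hs)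
      omega
    have hco : coeff (s + Finsupp.single v m) (c * X v ^ m + r) = coeff s c := by
      rw [coeff_add, X_pow_eq_monomial, coeff_mul_monomial, mul_one]
      have : coeff (s + Finsupp.single v m) r = 0 := by
        by_contra hne
        have hle := monomial_le_degreeOf v (mem_support_iff.mpr hne)
        have : (s + Finsupp.single v m) v = m := by
          simp [Finsupp.add_apply, Finsupp.single_apply, hsv]
        rcases hr with rfl | hr
        · simp at hne
        · omega
      rw [this, add_zero]
    have := monomial_le_degreeOf v (mem_support_iff.mpr (hco ▸ hs))
    rw [Finsupp.add_apply, Finsupp.single_apply, if_pos rfl, hsv] at this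
    omega

/-- `degreeOf` is additive on products of nonzero polynomials. -/
lemma degreeOf_mul_eq' (v : ℕ) (f g : R) (hf : f ≠ 0) (hg : g ≠ 0) :
    degreeOf v (f * g) = degreeOf v f + degreeOf v g := by
  classical
  -- decompose f and g
  have hdec : ∀ h : R, h ≠ 0 → ∃ c r : R, h = c * X v ^ (degreeOf v h) + r ∧
      degreeOf v c = 0 ∧ c ≠ 0 ∧ (r = 0 ∨ degreeOf v r < degreeOf v h) := by
    intro h hh
    rcases Nat.eq_zero_or_pos (degreeOf v h) with h0 | hpos
    · exact ⟨h, 0, by rw [h0]; ring, h0, hh, Or.inl rfl⟩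
    · obtain ⟨c, r, h1, h2, h3, h4, _⟩ := decomp_pos v h (degreeOf v h) rfl hpos
      exact ⟨c, r, h1, h2, h3, Or.inr h4⟩
  obtain ⟨cf, rf, hf1, hf2, hf3, hf4⟩ := hdec f hf
  obtain ⟨cg, rg, hg1, hg2, hg3, hg4⟩ := hdec g hg
  set a := degreeOf v f
  set b := degreeOf v g
  have key : f * g = (cf * cg) * X v ^ (a + b) + (cf * X v ^ a * rg + rf * g) := by
    calc f * g = cf * X v ^ a * g + rf * g := by rw [hf1]; ring
      _ = (cf * cg) * X v ^ (a + b) + (cf * X v ^ a * rg + rf * g) := by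
          nth_rewrite 1 [hg1]; ring
  rw [key]
  refine degreeOf_lead_eq v (a+b) _ _ (by
      have := degreeOf_mul_le v cf cg
      omega) (mul_ne_zero hf3 hg3) ?_
  rcases eq_or_ne (cf * X v ^ a * rg + rf * g) 0 with h0 | h0
  · exact Or.inl h0
  · right
    have hb1 : degreeOf v (cf * X v ^ a * rg) ≤ a + degreeOf v rg := by
      refine le_trans (degreeOf_mul_le _ _ _) ?_
      have h1 := degreeOf_mul_le v cf (X v ^ a)
      have h2 := degreeOf_X_pow_le (k := k) v a
      omega
    have hb2 : degreeOf v (rf * g) ≤ degreeOf v rf + b := by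
      refine le_trans (degreeOf_mul_le _ _ _) ?_
      omega
    have hab : 1 ≤ a + b := by
      by_contra hcon
      push_neg at hcon
      have ha0 : a = 0 := by omega
      have hb0 : b = 0 := by omega
      rcases hf4 with rfl | h4; rcases hg4 with rfl | h4'
      · simp at h0
      · omega
      · omega
    refine lt_of_le_of_lt (degreeOf_add_le _ _ _) ?_
    have e1 : degreeOf v (cf * X v ^ a * rg) < a + b := by
      rcases hg4 with rfl | h4
      · simpa [Nat.lt_iff_add_one_le] using (by
          have : degreeOf v ((cf * X v ^ a * (0:R))) = 0 := by simp
          omega)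
      · omega
    have e2 : degreeOf v (rf * g) < a + b := by
      rcases hf4 with rfl | h4
      · have : degreeOf v ((0:R) * g) = 0 := by simp
        omega
      · omega
    omega

lemma pderiv_as_sum (v : ℕ) (f : R) :
    pderiv v f = ∑ s ∈ f.support, monomial (s - Finsupp.single v 1) (coeff s f * s v) := by
  conv_lhs => rw [f.as_sum]
  rw [map_sum]
  exact Finset.sum_congr rfl fun s _ => pderiv_monomial

lemma vars_pderiv_subset (v : ℕ) (f : R) : (pderiv v f).vars ⊆ f.vars := by
  classical
  rw [pderiv_as_sum]
  intro x hx
  obtain ⟨s, hs, hxs⟩ := Finset.mem_biUnion.mp (vars_sum_subset _ _ hx)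
  have h2 : x ∈ (s - Finsupp.single v 1).support := vars_monomial_subset _ _ hxs
  exact (mem_vars x).mpr ⟨s, hs, Finsupp.support_tsub h2⟩

lemma degreeOf_pderiv_le (v : ℕ) (f : R) :
    degreeOf v (pderiv v f) ≤ degreeOf v f - 1 := by
  rw [pderiv_as_sum]
  refine le_trans (degreeOf_sum_le _ _ _) ?_
  refine Finset.sup_le fun s hs => ?_
  refine le_trans (degreeOf_monomial_le _ _ _) ?_
  have h1 := monomial_le_degreeOf v hs
  have h2 : (s - Finsupp.single v 1 : ℕ →₀ ℕ) v = s v - (Finsupp.single v 1 : ℕ →₀ ℕ) v :=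
    Finsupp.tsub_apply _ _ _
  rw [Finsupp.single_apply, if_pos rfl] at h2
  omega

lemma pderiv_ne_zero_of_degreeOf_pos [CharZero k] (v : ℕ) (f : R)
    (h : 1 ≤ degreeOf v f) : pderiv v f ≠ 0 := by
  classical
  have hf0 : f ≠ 0 := by intro h0; rw [h0, degreeOf_zero] at h; omega
  obtain ⟨s0, hs0, hsup⟩ := Finset.exists_mem_eq_sup f.support
    (support_nonempty.mpr hf0) (fun m : ℕ →₀ ℕ => m v)
  have hs0v : s0 v = degreeOf v f := by rw [degreeOf_eq_sup]; omega
  intro h0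
  have hco : coeff (s0 - Finsupp.single v 1) (pderiv v f)
      = coeff s0 f * (s0 v : k) := by
    rw [pderiv_as_sum, coeff_sum]
    rw [Finset.sum_eq_single s0]
    · rw [coeff_monomial, if_pos rfl]
    · intro s hs hne
      rw [coeff_monomial]
      split_ifs with heq
      · rcases Nat.eq_zero_or_pos (s v) with hz | hp
        · rw [hz]; push_cast; ring
        · exfalso
          apply hne
          ext w
          have hthis := DFunLike.congr_fun heq w
          rw [Finsupp.tsub_apply, Finsupp.tsub_apply, Finsupp.single_apply] at hthis
          have hs01 : 1 ≤ s0 v := by omega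
          rcases eq_or_ne v w with rfl | hw
          · rw [if_pos rfl] at hthis
            omega
          · rw [if_neg hw] at hthis
            omega
      · rfl
    · intro hnot
      exact absurd hs0 hnot
  rw [h0, coeff_zero] at hco
  have h1 : coeff s0 f ≠ 0 := mem_support_iff.mp hs0
  have h2 : (s0 v : k) ≠ 0 := Nat.cast_ne_zero.mpr (by omega)
  exact (mul_ne_zero h1 h2) hco.symm

/-- Pseudo-division by `G = lc * X M ^ d0 + Grest`. -/
lemma pseudoDiv (M d0 : ℕ) (lc Grest G : R)
    (hG : G = lc * X M ^ d0 + Grest) (h1 : 1 ≤ d0)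
    (hlc : degreeOf M lc = 0) (hre : degreeOf M Grest < d0)
    (hvlc : ∀ v ∈ lc.vars, v ≤ M) (hvre : ∀ v ∈ Grest.vars, v ≤ M) :
    ∀ d Q, degreeOf M Q ≤ d → (∀ v ∈ Q.vars, v ≤ M) →
      ∃ (a : ℕ) (W R' : R), lc ^ a * Q = W * G + R' ∧ degreeOf M R' < d0 ∧
        ∀ v ∈ R'.vars, v ≤ M := by
  intro d
  induction d with
  | zero =>
    intro Q hdQ hvQ
    exact ⟨0, 0, Q, by ring, by omega, hvQ⟩
  | succ d ih =>
    intro Q hdQ hvQ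
    by_cases hle : degreeOf M Q ≤ d
    · exact ih Q hle hvQ
    · have he : degreeOf M Q = d + 1 := by omega
      by_cases hsmall : d + 1 < d0
      · exact ⟨0, 0, Q, by ring, by omega, hvQ⟩
      · set e := d + 1 with hedef
        obtain ⟨lead, rest, hQeq, hlead0, hlead, hrest, hleadvars⟩ :=
          decomp_pos M Q e he (by omega)
        have hvrest : ∀ v ∈ rest.vars, v ≤ M := by
          intro v hv
          have : rest = Q - lead * X M ^ e := by rw [hQeq]; ring
          rw [this] at hv
          have h2 := vars_sub_subset (p := Q) (q := lead * X M ^ e) hv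
          rcases Finset.mem_union.mp h2 with h | h
          · exact hvQ v h
          · rcases Finset.mem_union.mp (vars_mul _ _ h) with h | h
            · exact hvQ v (hleadvars h)
            · rw [X_pow_eq_monomial] at h
              have := vars_monomial_subset _ _ h
              have h3 := Finsupp.support_single_subset this
              rw [Finset.mem_singleton] at h3
              omega
        set Q₂ := lc * rest - lead * X M ^ (e - d0) * Grest with hQ₂
        have hkey : lc * Q = (lead * X M ^ (e - d0)) * G + Q₂ := by
          rw [hQ₂, hG, hQeq]
          have : X M ^ (e - d0) * X M ^ d0 = (X M : R) ^ e := by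
            rw [← pow_add]
            congr 1
            omega
          calc lc * (lead * X M ^ e + rest)
              = lead * (X M ^ (e - d0) * X M ^ d0) * lc + (lc * rest) := by
                rw [this]; ring
            _ = lead * X M ^ (e - d0) * (lc * X M ^ d0 + Grest) +
                (lc * rest - lead * X M ^ (e - d0) * Grest) := by ring
        have hdQ₂ : degreeOf M Q₂ ≤ d := by
          rw [hQ₂]
          have b1 : degreeOf M (lc * rest) ≤ d := by
            have := degreeOf_mul_le M lc rest
            omega
          have b2 : degreeOf M (lead * X M ^ (e - d0) * Grest) ≤ d := by
            have i1 := degreeOf_mul_le M (lead * X M ^ (e - d0)) Grest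
            have i2 := degreeOf_mul_le M lead (X M ^ (e - d0))
            have i3 := degreeOf_X_pow_le (k := k) M (e - d0)
            omega
          have := degreeOf_sub_le M (lc * rest) (lead * X M ^ (e - d0) * Grest)
          omega
        have hvQ₂ : ∀ v ∈ Q₂.vars, v ≤ M := by
          intro v hv
          rw [hQ₂] at hv
          rcases Finset.mem_union.mp
            (vars_sub_subset (p := lc * rest) (q := lead * X M ^ (e - d0) * Grest) hv) with h | h
          · rcases Finset.mem_union.mp (vars_mul lc rest h) with h | h
            · exact hvlc v h
            · exact hvrest v h
          · rcases Finset.mem_union.mp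
              (vars_mul (lead * X M ^ (e - d0)) Grest h) with h | h
            · rcases Finset.mem_union.mp (vars_mul lead (X M ^ (e - d0)) h) with h | h
              · exact hvQ v (hleadvars h)
              · rw [X_pow_eq_monomial] at h
                have := vars_monomial_subset _ _ h
                have h3 := Finsupp.support_single_subset this
                rw [Finset.mem_singleton] at h3
                omega
            · exact hvre v h
        obtain ⟨a, W, R', hWR, hdR, hvR⟩ := ih Q₂ hdQ₂ hvQ₂
        refine ⟨a + 1, lc ^ a * (lead * X M ^ (e - d0)) + W, R', ?_, hdR, hvR⟩
        calc lc ^ (a + 1) * Q = lc ^ a * (lc * Q) := by ring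
          _ = lc ^ a * ((lead * X M ^ (e - d0)) * G + Q₂) := by rw [hkey]
          _ = (lc ^ a * (lead * X M ^ (e - d0))) * G + lc ^ a * Q₂ := by ring
          _ = (lc ^ a * (lead * X M ^ (e - d0))) * G + (W * G + R') := by rw [hWR]
          _ = (lc ^ a * (lead * X M ^ (e - d0)) + W) * G + R' := by ring

lemma eq_C_of_vars_empty (Q : R) (h : Q.vars = ∅) : Q = C (coeff 0 Q) := by
  classical
  have hsup : ∀ s ∈ Q.support, s = (0 : ℕ →₀ ℕ) := by
    intro s hs
    ext v
    by_contra hv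
    have hmem : v ∈ Q.vars := (mem_vars v).mpr ⟨s, hs, Finsupp.mem_support_iff.mpr hv⟩
    simp [h] at hmem
  have hsub : Q.support ⊆ {0} := fun s hs => Finset.mem_singleton.mpr (hsup s hs)
  rcases Finset.subset_singleton_iff.mp hsub with h0 | h0
  · rw [support_eq_empty] at h0
    rw [h0]
    simp
  · conv_lhs => rw [Q.as_sum, h0]
    rw [Finset.sum_singleton, monomial_zero']

section D

variable (δ : k → k)
variable (D : MvPolynomial ℕ k → MvPolynomial ℕ k)
variable (hDadd : ∀ p q, D (p + q) = D p + D q)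
variable (hDmul : ∀ p q, D (p * q) = p * D q + q * D p)
variable (hDC : ∀ a : k, D (C a) = C (δ a))
variable (hDX : ∀ n : ℕ, D (X n) = X (n + 1))

include hDadd hDmul hDC hDX

lemma Dtop (M : ℕ) (p : R) (hp : ∀ v ∈ p.vars, v ≤ M) :
    ∃ T : R, D p = pderiv M p * X (M + 1) + T ∧ ∀ v ∈ T.vars, v ≤ M := by
  obtain ⟨q, rfl⟩ := exists_rename_eq_of_vars_subset_range p (Fin.val : Fin (M+1) → ℕ)
    Fin.val_injective (by
      intro v hv
      exact ⟨⟨v, Nat.lt_succ_of_le (hp v hv)⟩, rfl⟩)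
  clear hp
  induction q using MvPolynomial.induction_on with
  | C a =>
    refine ⟨C (δ a), ?_, by simp⟩
    rw [rename_C, hDC, pderiv_C]
    ring
  | add p q ihp ihq =>
    obtain ⟨Tp, hTp, hvp⟩ := ihp
    obtain ⟨Tq, hTq, hvq⟩ := ihq
    refine ⟨Tp + Tq, ?_, ?_⟩
    · rw [map_add, hDadd, hTp, hTq, map_add]
      ring
    · intro v hv
      rcases Finset.mem_union.mp (vars_add_subset Tp Tq hv) with h | h
      · exact hvp v h
      · exact hvq v h
  | mul_X p i ih =>
    obtain ⟨Tp, hTp, hvp⟩ := ih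
    have hvrp : ∀ v ∈ (rename (Fin.val : Fin (M+1) → ℕ) p).vars, v ≤ M := by
      intro v hv
      obtain ⟨i, _, rfl⟩ := mem_vars_rename _ _ hv
      exact Nat.lt_succ_iff.mp i.isLt
    rw [map_mul, rename_X]
    set rp := rename (Fin.val : Fin (M+1) → ℕ) p with hrp
    have hD : D (rp * X (i : ℕ)) = rp * X ((i : ℕ) + 1) + X (i : ℕ) * D rp := by
      rw [hDmul, hDX]
    rcases eq_or_ne (i : ℕ) M with hiM | hiM
    · refine ⟨X (i : ℕ) * Tp, ?_, ?_⟩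
      · rw [hD, hTp, pderiv_mul, hiM, pderiv_X_self]
        ring
      · intro v hv
        rcases Finset.mem_union.mp (vars_mul (X (i : ℕ)) Tp hv) with h | h
        · rw [vars_X, Finset.mem_singleton] at h
          omega
        · exact hvp v h
    · have hlt : (i : ℕ) < M := by
        have := Nat.lt_succ_iff.mp i.isLt
        omega
      refine ⟨rp * X ((i : ℕ) + 1) + X (i : ℕ) * Tp, ?_, ?_⟩
      · rw [hD, hTp, pderiv_mul, pderiv_X_of_ne hiM]
        ring
      · intro v hv
        rcases Finset.mem_union.mp (vars_add_subset _ _ hv) with h | h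
        · rcases Finset.mem_union.mp (vars_mul rp (X ((i : ℕ) + 1)) h) with h | h
          · exact hvrp v h
          · rw [vars_X, Finset.mem_singleton] at h
            omega
        · rcases Finset.mem_union.mp (vars_mul (X (i : ℕ)) Tp h) with h | h
          · rw [vars_X, Finset.mem_singleton] at h
            omega
          · exact hvp v h

lemma varsD (M : ℕ) (p : R) (hp : ∀ v ∈ p.vars, v ≤ M) :
    ∀ v ∈ (D p).vars, v ≤ M + 1 := by
  obtain ⟨T, hT, hvT⟩ := Dtop δ D hDadd hDmul hDC hDX M p hp
  rw [hT]
  intro v hv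
  rcases Finset.mem_union.mp (vars_add_subset _ _ hv) with h | h
  · rcases Finset.mem_union.mp (vars_mul (pderiv M p) (X (M+1)) h) with h | h
    · exact le_trans (hp v (vars_pderiv_subset M p h)) (Nat.le_succ M)
    · rw [vars_X, Finset.mem_singleton] at h
      omega
  · exact le_trans (hvT v h) (Nat.le_succ M)

lemma iterD (P : R) (N : ℕ) (hP : ∀ v ∈ P.vars, v ≤ N) :
    ∀ j, 1 ≤ j → ∃ T : R, D^[j] P = pderiv N P * X (N + j) + T ∧
      ∀ v ∈ T.vars, v ≤ N + j - 1 := by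
  intro j
  induction j with
  | zero => omega
  | succ j ih =>
    intro _
    rcases Nat.eq_zero_or_pos j with rfl | hj
    · obtain ⟨T, hT, hvT⟩ := Dtop δ D hDadd hDmul hDC hDX N P hP
      exact ⟨T, by simpa using hT, by simpa using hvT⟩
    · obtain ⟨T, hT, hvT⟩ := ih hj
      have hS : ∀ v ∈ (pderiv N P).vars, v ≤ N := fun v hv => hP v (vars_pderiv_subset N P hv)
      have hDS := varsD δ D hDadd hDmul hDC hDX N (pderiv N P) hS
      have hDT := varsD δ D hDadd hDmul hDC hDX (N + j - 1) T hvT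
      refine ⟨X (N + j) * D (pderiv N P) + D T, ?_, ?_⟩
      · rw [Function.iterate_succ_apply', hT, hDadd, hDmul, hDX]
        have : N + j + 1 = N + (j + 1) := by omega
        rw [this]
        ring
      · intro v hv
        rcases Finset.mem_union.mp (vars_add_subset _ _ hv) with h | h
        · rcases Finset.mem_union.mp (vars_mul (X (N + j)) (D (pderiv N P)) h) with h | h
          · rw [vars_X, Finset.mem_singleton] at h
            omega
          · have := hDS v h
            omega
        · have := hDT v h
          omega

end D

section Reduce

variable (δ : k → k)
variable (D : MvPolynomial ℕ k → MvPolynomial ℕ k)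
variable (hDadd : ∀ p q, D (p + q) = D p + D q)
variable (hDmul : ∀ p q, D (p * q) = p * D q + q * D p)
variable (hDC : ∀ a : k, D (C a) = C (δ a))
variable (hDX : ∀ n : ℕ, D (X n) = X (n + 1))

include hDadd hDmul hDC hDX

lemma reduceOrder (P : R) (N : ℕ) (hP : ∀ v ∈ P.vars, v ≤ N) :
    ∀ j Q, (∀ v ∈ Q.vars, v ≤ N + j) →
      ∃ (a : ℕ) (R' : R),
        (pderiv N P) ^ a * Q - R' ∈ Ideal.span {B : R | ∃ i : ℕ, B = D^[i] P} ∧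
        ∀ v ∈ R'.vars, v ≤ N := by
  intro j
  set S := pderiv N P with hS
  set J := Ideal.span {B : R | ∃ i : ℕ, B = D^[i] P} with hJ
  induction j with
  | zero =>
    intro Q hQ
    refine ⟨0, Q, ?_, by simpa using hQ⟩
    simp
  | succ j ih =>
    intro Q hQ
    set M := N + (j + 1) with hM
    obtain ⟨T, hT, hvT⟩ := iterD δ D hDadd hDmul hDC hDX P N hP (j+1) (by omega)
    have hvS : ∀ v ∈ S.vars, v ≤ N := fun v hv => hP v (vars_pderiv_subset N P hv)
    have hdS : degreeOf M S = 0 := by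
      by_contra h
      have := hvS M ((mem_vars_iff_degreeOf_ne_zero M S).mpr h)
      omega
    have hvT' : ∀ v ∈ T.vars, v ≤ M := by
      intro v hv
      have := hvT v hv
      omega
    have hdT : degreeOf M T < 1 := by
      rcases Nat.eq_zero_or_pos (degreeOf M T) with h | h
      · omega
      · have := hvT M ((mem_vars_iff_degreeOf_ne_zero M T).mpr (by omega))
        omega
    have hG : D^[j+1] P = S * X M ^ 1 + T := by
      rw [hT, pow_one]
    obtain ⟨a, W, R₁, hWR, hdR₁, hvR₁⟩ := pseudoDiv M 1 S T (D^[j+1] P) hG le_rfl hdS hdT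
      (fun v hv => le_trans (hvS v hv) (by omega)) hvT' (degreeOf M Q) Q le_rfl hQ
    have hvR₁' : ∀ v ∈ R₁.vars, v ≤ N + j := by
      intro v hv
      have h1 := hvR₁ v hv
      have h2 : v ≠ M := by
        intro rfl2
        rw [rfl2, mem_vars_iff_degreeOf_ne_zero] at hv
        omega
      omega
    obtain ⟨b, R', hmem, hvR'⟩ := ih R₁ hvR₁'
    refine ⟨a + b, R', ?_, hvR'⟩
    have heq : S ^ (a + b) * Q - R' = (S ^ b * W) * D^[j+1] P + (S ^ b * R₁ - R') := by
      have : S ^ (a + b) * Q = S ^ b * (S ^ a * Q) := by ring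
      rw [this, hWR]
      ring
    rw [heq]
    refine Ideal.add_mem _ ?_ hmem
    exact Ideal.mul_mem_left _ _ (Ideal.subset_span ⟨j + 1, rfl⟩)

end Reduce

end RittAux


/-- Every nonzero (proper) prime differential ideal of the differential
polynomial ring `k{x}` (modelled as `MvPolynomial ℕ k`, where the variable `n` stands for
`x^(n)`, with derivation `D` extending the derivation `δ` of `k` and sending `x^(n)` to
`x^(n+1)`) is of the form `I(P) = {Q | ∃ m, S_P ^ m * Q ∈ ⟨P⟩}` for some irreducible
differential polynomial `P` (of some order `N ≥ 0`), where `S_P = ∂P/∂x^(N)` is the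
separant of `P` and `⟨P⟩` is the smallest differential ideal containing `P`, i.e. the
ideal spanned by the iterated derivatives of `P`. -/
theorem prime_differential_ideal_eq_separant_saturation
    {k : Type*} [Field k] [CharZero k]
    (δ : k → k)
    (hδadd : ∀ x y, δ (x + y) = δ x + δ y)
    (hδmul : ∀ x y, δ (x * y) = x * δ y + y * δ x)
    (D : MvPolynomial ℕ k → MvPolynomial ℕ k)
    (hDadd : ∀ p q, D (p + q) = D p + D q)
    (hDmul : ∀ p q, D (p * q) = p * D q + q * D p)
    (hDC : ∀ a : k, D (C a) = C (δ a))
    (hDX : ∀ n : ℕ, D (X n) = X (n + 1))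
    (I : Ideal (MvPolynomial ℕ k)) (hI0 : I ≠ ⊥) (hIprime : I.IsPrime)
    (hIdiff : ∀ Q ∈ I, D Q ∈ I) :
    ∃ (P : MvPolynomial ℕ k) (N : ℕ),
      Irreducible P ∧ N ∈ P.vars ∧ (∀ m ∈ P.vars, m ≤ N) ∧
      (I : Set (MvPolynomial ℕ k)) =
        {Q | ∃ m : ℕ, (pderiv N P) ^ m * Q ∈ Ideal.span {R | ∃ j : ℕ, R = D^[j] P}} := by
    classical
  obtain ⟨Q₀, hQ₀I, hQ₀0⟩ := (Submodule.ne_bot_iff I).mp hI0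
  have hproper : I ≠ ⊤ := hIprime.ne_top
  have hconst : ∀ Q : MvPolynomial ℕ k, Q ∈ I → Q ≠ 0 → Q.vars.Nonempty := by
    intro Q hQ hne
    rw [Finset.nonempty_iff_ne_empty]
    intro hemp
    have hC := RittAux.eq_C_of_vars_empty Q hemp
    have ha : coeff 0 Q ≠ 0 := fun h => hne (by rw [hC, h, map_zero])
    have hu : IsUnit Q := by
      rw [hC]
      exact IsUnit.of_mul_eq_one (C (coeff 0 Q)⁻¹)
        (by rw [← map_mul, mul_inv_cancel₀ ha, map_one])
    exact hproper (I.eq_top_of_isUnit_mem hQ hu)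
  have h1 : ∃ n : ℕ, ∃ Q : MvPolynomial ℕ k, Q ∈ I ∧ Q ≠ 0 ∧ ∀ v ∈ Q.vars, v ≤ n :=
    ⟨Q₀.vars.sup id, Q₀, hQ₀I, hQ₀0, fun v hv => Finset.le_sup (f := id) hv⟩
  set N := Nat.find h1 with hNdef
  obtain ⟨P₀, hP₀I, hP₀0, hP₀v⟩ := Nat.find_spec h1
  have minvars : ∀ Q : MvPolynomial ℕ k, Q ∈ I → Q ≠ 0 → (∀ v ∈ Q.vars, v ≤ N) →
      1 ≤ degreeOf N Q := by
    intro Q hQ hne hv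
    by_contra hcon
    push_neg at hcon
    have hdeg0 : degreeOf N Q = 0 := by omega
    have hNnot : N ∉ Q.vars := by
      rw [RittAux.mem_vars_iff_degreeOf_ne_zero]
      omega
    rcases Nat.eq_zero_or_pos N with hN0 | hNpos
    · obtain ⟨v, hvm⟩ := hconst Q hQ hne
      have hvle := hv v hvm
      have : v ≠ N := fun h => hNnot (h ▸ hvm)
      omega
    · refine Nat.find_min h1 (m := N - 1) (by omega) ⟨Q, hQ, hne, fun v hv2 => ?_⟩
      have hvle := hv v hv2
      have : v ≠ N := fun h => hNnot (h ▸ hv2)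
      omega
  have h2 : ∃ d : ℕ, ∃ Q : MvPolynomial ℕ k, Q ∈ I ∧ Q ≠ 0 ∧
      (∀ v ∈ Q.vars, v ≤ N) ∧ degreeOf N Q ≤ d :=
    ⟨degreeOf N P₀, P₀, hP₀I, hP₀0, hP₀v, le_rfl⟩
  set d0 := Nat.find h2 with hd0def
  obtain ⟨P₁, hP₁I, hP₁0, hP₁v, hP₁d⟩ := Nat.find_spec h2
  have mindeg : ∀ Q : MvPolynomial ℕ k, Q ∈ I → Q ≠ 0 → (∀ v ∈ Q.vars, v ≤ N) →
      d0 ≤ degreeOf N Q := by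
    intro Q hQ hne hv
    exact Nat.find_min' h2 ⟨Q, hQ, hne, hv, le_rfl⟩
  have hd0pos : 1 ≤ d0 := by
    have := minvars P₁ hP₁I hP₁0 hP₁v
    omega
  obtain ⟨f, hfprime, hfassoc⟩ := UniqueFactorizationMonoid.exists_prime_factors P₁ hP₁0
  obtain ⟨u, hu⟩ := hfassoc
  have hprodI : f.prod ∈ I := by
    have hp : f.prod = P₁ * ((u⁻¹ : (MvPolynomial ℕ k)ˣ) : MvPolynomial ℕ k) := by
      rw [← hu]
      rw [mul_assoc, ← Units.val_mul, mul_inv_cancel, Units.val_one, mul_one]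
    rw [hp]
    exact I.mul_mem_right _ hP₁I
  obtain ⟨P, hPf, hPI⟩ := (hIprime.multiset_prod_mem_iff_exists_mem f).mp hprodI
  have hPprime : Prime P := hfprime P hPf
  have hP0 : P ≠ 0 := hPprime.ne_zero
  have hPdvd : P ∣ P₁ := dvd_trans (Multiset.dvd_prod hPf) ⟨(u : MvPolynomial ℕ k), hu.symm⟩
  obtain ⟨B, hB⟩ := hPdvd
  have hB0 : B ≠ 0 := by
    rintro rfl
    rw [mul_zero] at hB
    exact hP₁0 hB
  have hdeq : degreeOf N P₁ = degreeOf N P + degreeOf N B := by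
    rw [hB]
    exact RittAux.degreeOf_mul_eq' N P B hP0 hB0
  have hPv : ∀ v ∈ P.vars, v ≤ N := by
    intro v hv
    have h1v : degreeOf v P ≠ 0 := (RittAux.mem_vars_iff_degreeOf_ne_zero v P).mp hv
    have h2v : degreeOf v P₁ ≠ 0 := by
      rw [hB, RittAux.degreeOf_mul_eq' v P B hP0 hB0]
      omega
    exact hP₁v v ((RittAux.mem_vars_iff_degreeOf_ne_zero v P₁).mpr h2v)
  have hPd0 : degreeOf N P = d0 := by
    have hge := mindeg P hPI hP0 hPv
    omega
  have hNP : N ∈ P.vars := (RittAux.mem_vars_iff_degreeOf_ne_zero N P).mpr (by omega)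
  set S := pderiv N P with hSdef
  have hSv : ∀ v ∈ S.vars, v ≤ N := fun v hv => hPv v (RittAux.vars_pderiv_subset N P hv)
  have hS0 : S ≠ 0 := RittAux.pderiv_ne_zero_of_degreeOf_pos N P (by omega)
  have hSd : degreeOf N S ≤ d0 - 1 := by
    have hle := RittAux.degreeOf_pderiv_le N P
    rw [← hSdef] at hle
    omega
  have hSnotI : S ∉ I := by
    intro hmem
    have := mindeg S hmem hS0 hSv
    omega
  set J := Ideal.span {B : MvPolynomial ℕ k | ∃ j : ℕ, B = D^[j] P} with hJdef
  have hDiter : ∀ j : ℕ, D^[j] P ∈ I := by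
    intro j
    induction j with
    | zero => simpa using hPI
    | succ j ih =>
      rw [Function.iterate_succ_apply']
      exact hIdiff _ ih
  have hJI : J ≤ I := Ideal.span_le.mpr (by rintro B ⟨j, rfl⟩; exact hDiter j)
  refine ⟨P, N, hPprime.irreducible, hNP, hPv, ?_⟩
  ext Q
  simp only [SetLike.mem_coe, Set.mem_setOf_eq]
  constructor
  · intro hQ
    obtain ⟨a, R₁, hmem, hvR₁⟩ := RittAux.reduceOrder δ D hDadd hDmul hDC hDX P N hPv
      (Q.vars.sup id) Q (fun v hv => le_trans (Finset.le_sup (f := id) hv) (by omega))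
    have hR₁I : R₁ ∈ I := by
      have hh1 : S ^ a * Q ∈ I := I.mul_mem_left _ hQ
      have hh2 : S ^ a * Q - R₁ ∈ I := hJI hmem
      have := I.sub_mem hh1 hh2
      simpa using this
    obtain ⟨lc, Prest, hPdec, hlc0, hlcne, hPrest, hlcv⟩ := RittAux.decomp_pos N P d0 hPd0 hd0pos
    have hPrestv : ∀ v ∈ Prest.vars, v ≤ N := by
      intro v hv
      have heq : Prest = P - lc * X N ^ d0 := by rw [hPdec]; ring
      rw [heq] at hv
      rcases Finset.mem_union.mp (vars_sub_subset (p := P) (q := lc * X N ^ d0) hv) with h | h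
      · exact hPv v h
      · rcases Finset.mem_union.mp (vars_mul lc (X N ^ d0) h) with h | h
        · exact hPv v (hlcv h)
        · rw [X_pow_eq_monomial] at h
          have h2 := RittAux.vars_monomial_subset _ _ h
          have h3 := Finsupp.support_single_subset h2
          rw [Finset.mem_singleton] at h3
          omega
    obtain ⟨e, W, R₂, hWR, hdR₂, hvR₂⟩ := RittAux.pseudoDiv N d0 lc Prest P hPdec hd0pos
      hlc0 hPrest (fun v hv => hPv v (hlcv hv)) hPrestv (degreeOf N R₁) R₁ le_rfl hvR₁
    have hR₂I : R₂ ∈ I := by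
      have heq : R₂ = lc ^ e * R₁ - W * P := by rw [hWR]; ring
      rw [heq]
      exact I.sub_mem (I.mul_mem_left _ hR₁I) (I.mul_mem_left W hPI)
    have hR₂0 : R₂ = 0 := by
      by_contra hne
      have := mindeg R₂ hR₂I hne hvR₂
      omega
    have hdvd : P ∣ lc ^ e * R₁ := ⟨W, by rw [hWR, hR₂0, add_zero]; ring⟩
    have hPnotlc : ¬ P ∣ lc := by
      rintro ⟨u2, hu2⟩
      have hu20 : u2 ≠ 0 := by
        rintro rfl
        rw [mul_zero] at hu2
        exact hlcne hu2
      have hdm := RittAux.degreeOf_mul_eq' N P u2 hP0 hu20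
      rw [← hu2] at hdm
      omega
    have hPR₁ : P ∣ R₁ := by
      rcases hPprime.2.2 _ _ hdvd with h | h
      · exact absurd (hPprime.dvd_of_dvd_pow h) hPnotlc
      · exact h
    obtain ⟨V, hV⟩ := hPR₁
    have hR₁J : R₁ ∈ J := by
      rw [hV]
      exact Ideal.mul_mem_right _ _ (Ideal.subset_span ⟨0, rfl⟩)
    refine ⟨a, ?_⟩
    have heq : S ^ a * Q = (S ^ a * Q - R₁) + R₁ := by ring
    rw [heq]
    exact J.add_mem hmem hR₁J
  · rintro ⟨m, hm⟩
    have hh1 : S ^ m * Q ∈ I := hJI hm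
    rcases hIprime.mem_or_mem hh1 with h | h
    · exact absurd (hIprime.mem_of_pow_mem m h) hSnotI
    · exact h
end

section
/- Let k be a differential field of characteristic zero and P ∈ k{x} an irreducible differential polynomial of order N ≥ 0. Then I(P) = {Q ∈ k{x} : S_P^m · Q ∈ ⟨P⟩ for some m ∈ ℕ} is the smallest prime differential ideal of k{x} containing P and not containing S_P: I(P) is a prime differential ideal with P ∈ I(P) and S_P ∉ I(P), and every prime differential ideal I of k{x} with P ∈ I and S_P ∉ I contains I(P). -/
open MvPolynomial

namespace SepSat

/-- Recursive definition of values for variables, solving the iterated derivatives. -/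
noncomputable def solveRec {k F : Type*} [CommSemiring k] [CommRing F]
    (N : ℕ) (base : ℕ → F) (sInv : F) (f : k →+* F) (ρ : ℕ → MvPolynomial ℕ k) : ℕ → F
  | n =>
    if _ : n ≤ N then base n
    else - sInv * MvPolynomial.eval₂ f
      (fun m => if hm : m < n then solveRec N base sInv f ρ m else 0) (ρ (n - N))
  termination_by n => n

variable {R : Type*} {σ : Type*}

section Helpers
variable [CommSemiring R] [DecidableEq σ]

lemma vars_sum_le {ι : Type*} (s : Finset ι) (f : ι → MvPolynomial σ R) (T : Finset σ)
    (h : ∀ i ∈ s, (f i).vars ⊆ T) : (∑ i ∈ s, f i).vars ⊆ T := by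
  classical
  induction s using Finset.induction_on with
  | empty => simp
  | insert a s' hx ih =>
    rw [Finset.sum_insert hx]
    refine (vars_add_subset _ _).trans ?_
    refine Finset.union_subset (h a (Finset.mem_insert_self _ _)) (ih fun i hi => h i ?_)
    exact Finset.mem_insert_of_mem hi

lemma coeff_pderiv (i : σ) (b : σ →₀ ℕ) (p : MvPolynomial σ R) :
    coeff b (pderiv i p) = coeff (b + Finsupp.single i 1) p * ((b i + 1 : ℕ) : R) := by
  classical
  have hcancel : (b + Finsupp.single i 1) - Finsupp.single i 1 = b := add_tsub_cancel_right _ _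
  conv_lhs => rw [p.as_sum]
  rw [map_sum]
  simp only [pderiv_monomial]
  rw [MvPolynomial.coeff_sum]
  simp only [coeff_monomial]
  rw [Finset.sum_eq_single (b + Finsupp.single i 1)]
  · rw [if_pos hcancel, Finsupp.add_apply, Finsupp.single_eq_same]

  · intro s hs hne
    split_ifs with h
    · by_cases hsi : s i = 0
      · simp [hsi]
      · exfalso
        apply hne
        ext j
        have hh := DFunLike.congr_fun h j
        rw [Finsupp.tsub_apply] at hh
        rw [Finsupp.add_apply]
        by_cases hj : j = i
        · subst hj
          rw [Finsupp.single_eq_same] at hh ⊢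
          omega
        · rw [Finsupp.single_eq_of_ne' (fun hh2 => hj hh2.symm)] at hh ⊢
          omega
    · rfl
  · intro hnot
    rw [if_pos hcancel, MvPolynomial.notMem_support_iff.mp hnot, zero_mul]

lemma vars_pderiv (i : σ) (p : MvPolynomial σ R) : (pderiv i p).vars ⊆ p.vars := by
  classical
  intro j hj
  rw [mem_vars] at hj ⊢
  obtain ⟨m, hm, hjm⟩ := hj
  refine ⟨m + Finsupp.single i 1, ?_, ?_⟩
  · rw [mem_support_iff] at hm ⊢
    intro h
    apply hm
    rw [coeff_pderiv, h, zero_mul]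
  · rw [Finsupp.mem_support_iff] at hjm ⊢
    simp only [Finsupp.add_apply]
    omega

lemma not_mem_vars_iff_degreeOf_eq_zero (t : σ) (p : MvPolynomial σ R) :
    t ∉ p.vars ↔ degreeOf t p = 0 := by
  classical
  rw [degreeOf_eq_sup, ← Nat.bot_eq_zero, Finset.sup_eq_bot_iff, mem_vars]
  push_neg
  constructor
  · intro h m hm
    have := h m hm
    simpa [Finsupp.mem_support_iff] using this
  · intro h m hm
    have := h m hm
    simp [Finsupp.mem_support_iff, Nat.bot_eq_zero] at this
    simp [Finsupp.mem_support_iff, this]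

end Helpers

section Cmap
variable [CommSemiring R]

/-- Coefficientwise application of `δ`. -/
noncomputable def cmap (δ : R → R) (h0 : δ 0 = 0) (p : MvPolynomial σ R) : MvPolynomial σ R :=
  AddMonoidAlgebra.ofCoeff (Finsupp.mapRange δ h0 (AddMonoidAlgebra.coeff p))

lemma coeff_cmap (δ : R → R) (h0 : δ 0 = 0) (p : MvPolynomial σ R) (m : σ →₀ ℕ) :
    coeff m (cmap δ h0 p) = δ (coeff m p) :=
  Finsupp.mapRange_apply (hf := h0)

lemma cmap_add (δ : R → R) (h0 : δ 0 = 0)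
    (hadd : ∀ x y, δ (x + y) = δ x + δ y) (p q : MvPolynomial σ R) :
    cmap δ h0 (p + q) = cmap δ h0 p + cmap δ h0 q := by
  apply MvPolynomial.ext
  intro m
  rw [coeff_add, coeff_cmap, coeff_add, coeff_cmap, coeff_cmap, hadd]

lemma cmap_C (δ : R → R) (h0 : δ 0 = 0) (a : R) :
    cmap δ h0 (C a : MvPolynomial σ R) = C (δ a) := by
  apply MvPolynomial.ext
  intro m
  classical
  rw [coeff_cmap, coeff_C, coeff_C]
  split_ifs <;> simp [h0]

lemma cmap_mul_X (δ : R → R) (h0 : δ 0 = 0) (p : MvPolynomial σ R) (j : σ) :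
    cmap δ h0 (p * X j) = cmap δ h0 p * X j := by
  apply MvPolynomial.ext
  intro m
  classical
  rw [coeff_cmap, coeff_mul_X', coeff_mul_X']
  split_ifs <;> simp [h0, coeff_cmap]

lemma vars_cmap (δ : R → R) (h0 : δ 0 = 0) (p : MvPolynomial σ R) :
    (cmap δ h0 p).vars ⊆ p.vars := by
  classical
  intro j hj
  rw [mem_vars] at hj ⊢
  obtain ⟨m, hm, hjm⟩ := hj
  refine ⟨m, ?_, hjm⟩
  rw [mem_support_iff] at hm ⊢
  intro h
  exact hm (by rw [coeff_cmap, h, h0])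

end Cmap


section DFormula
variable {k : Type*} [CommRing k]

lemma D_formula (δ : k → k) (h0 : δ 0 = 0) (hδadd : ∀ x y, δ (x + y) = δ x + δ y)
    (D : MvPolynomial ℕ k → MvPolynomial ℕ k)
    (hDadd : ∀ p q, D (p + q) = D p + D q)
    (hDmul : ∀ p q, D (p * q) = p * D q + q * D p)
    (hDC : ∀ a : k, D (C a) = C (δ a))
    (hDX : ∀ n : ℕ, D (X n) = X (n + 1))
    (M : ℕ) (p : MvPolynomial ℕ k) (hp : p.vars ⊆ Finset.range M) :
    D p = cmap δ h0 p + ∑ i ∈ Finset.range M, pderiv i p * X (i + 1) := by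
  obtain ⟨q, rfl⟩ := exists_rename_eq_of_vars_subset_range p (Fin.val : Fin M → ℕ)
    Fin.val_injective (by
      intro x hx
      have : x < M := Finset.mem_range.mp (hp hx)
      exact ⟨⟨x, this⟩, rfl⟩)
  clear hp
  induction q using MvPolynomial.induction_on with
  | C a =>
    rw [rename_C, hDC, cmap_C]
    simp [pderiv_C]
  | add q₁ q₂ ih₁ ih₂ =>
    rw [map_add, hDadd, ih₁, ih₂, cmap_add δ h0 hδadd]
    simp only [map_add, add_mul, Finset.sum_add_distrib]
    ring
  | mul_X q j ih =>
    rw [map_mul, rename_X]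
    set p := rename (Fin.val : Fin M → ℕ) q with hpdef
    rw [hDmul, hDX, cmap_mul_X]
    have hsum : ∑ i ∈ Finset.range M, pderiv i (p * X (j : ℕ)) * X (i + 1)
        = (∑ i ∈ Finset.range M, pderiv i p * X (i + 1)) * X (j : ℕ) + p * X ((j : ℕ) + 1) := by
      have hterm : ∀ i ∈ Finset.range M,
          pderiv i (p * X (j : ℕ)) * X (i + 1)
            = pderiv i p * X (i+1) * X (j : ℕ)
              + (if i = (j : ℕ) then p * X ((j:ℕ) + 1) else 0) := by
        intro i _
        rw [pderiv_mul]
        by_cases hij : i = (j : ℕ)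
        · subst hij
          rw [if_pos rfl, pderiv_X_self]
          ring
        · rw [if_neg hij, pderiv_X_of_ne (fun h => hij h.symm)]
          ring
      rw [Finset.sum_congr rfl hterm, Finset.sum_add_distrib, ← Finset.sum_mul,
        Finset.sum_ite_eq' (Finset.range M) (j : ℕ) (fun _ => p * X ((j:ℕ) + 1)),
        if_pos (Finset.mem_range.mpr j.isLt)]
    rw [hsum, ih]
    ring
end DFormula


section DFormula2
variable {k : Type*} [CommRing k] [Nontrivial k]

lemma vars_D (δ : k → k) (h0 : δ 0 = 0) (hδadd : ∀ x y, δ (x + y) = δ x + δ y)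
    (D : MvPolynomial ℕ k → MvPolynomial ℕ k)
    (hDadd : ∀ p q, D (p + q) = D p + D q)
    (hDmul : ∀ p q, D (p * q) = p * D q + q * D p)
    (hDC : ∀ a : k, D (C a) = C (δ a))
    (hDX : ∀ n : ℕ, D (X n) = X (n + 1))
    (M : ℕ) (p : MvPolynomial ℕ k) (hp : p.vars ⊆ Finset.range M) :
    (D p).vars ⊆ Finset.range (M + 1) := by
  rw [D_formula δ h0 hδadd D hDadd hDmul hDC hDX M p hp]
  refine (vars_add_subset _ _).trans (Finset.union_subset ?_ ?_)
  · exact ((vars_cmap δ h0 p).trans hp).trans (Finset.range_subset_range.mpr (Nat.le_succ M))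
  · refine vars_sum_le _ _ _ ?_
    intro i hi
    refine (vars_mul _ _).trans (Finset.union_subset ?_ ?_)
    · exact ((vars_pderiv i p).trans hp).trans (Finset.range_subset_range.mpr (Nat.le_succ M))
    · rw [vars_X]
      exact Finset.singleton_subset_iff.mpr
        (Finset.mem_range.mpr (Nat.add_lt_add_right (Finset.mem_range.mp hi) 1))

/-- Structure of iterated derivatives : `D^[j+1] P = S * X (N+j+1) + r`. -/
lemma D_iterate_structure (δ : k → k) (h0 : δ 0 = 0) (hδadd : ∀ x y, δ (x + y) = δ x + δ y)
    (D : MvPolynomial ℕ k → MvPolynomial ℕ k)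
    (hDadd : ∀ p q, D (p + q) = D p + D q)
    (hDmul : ∀ p q, D (p * q) = p * D q + q * D p)
    (hDC : ∀ a : k, D (C a) = C (δ a))
    (hDX : ∀ n : ℕ, D (X n) = X (n + 1))
    (P : MvPolynomial ℕ k) (N : ℕ) (hP : P.vars ⊆ Finset.range (N + 1)) :
    ∀ j : ℕ, ∃ r : MvPolynomial ℕ k,
      D^[j+1] P = pderiv N P * X (N + j + 1) + r ∧ r.vars ⊆ Finset.range (N + j + 1) := by
  have hXvars : ∀ (n M : ℕ), n < M → (X n : MvPolynomial ℕ k).vars ⊆ Finset.range M := by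
    intro n M hn
    rw [vars_X]
    exact Finset.singleton_subset_iff.mpr (Finset.mem_range.mpr hn)
  intro j
  induction j with
  | zero =>
    refine ⟨cmap δ h0 P + ∑ i ∈ Finset.range N, pderiv i P * X (i + 1), ?_, ?_⟩
    · rw [Function.iterate_one, D_formula δ h0 hδadd D hDadd hDmul hDC hDX (N+1) P hP,
        Finset.sum_range_succ]
      ring
    · refine (vars_add_subset _ _).trans (Finset.union_subset ?_ ?_)
      · exact (vars_cmap δ h0 P).trans (hP.trans (by simp))
      · refine vars_sum_le _ _ _ ?_
        intro i hi
        refine (vars_mul _ _).trans (Finset.union_subset ?_ ?_)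
        · exact (vars_pderiv i P).trans (hP.trans (by simp))
        · exact hXvars _ _ (by have := Finset.mem_range.mp hi; omega)
  | succ j ih =>
    obtain ⟨r, hr, hrv⟩ := ih
    refine ⟨X (N + j + 1) * D (pderiv N P) + D r, ?_, ?_⟩
    · rw [Function.iterate_succ_apply', hr, hDadd, hDmul, hDX]
      have : N + j + 1 + 1 = N + (j+1) + 1 := by omega
      rw [this]
      ring
    · refine (vars_add_subset _ _).trans (Finset.union_subset ?_ ?_)
      · refine (vars_mul _ _).trans (Finset.union_subset ?_ ?_)
        · exact hXvars _ _ (by omega)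
        · have h1 : (D (pderiv N P)).vars ⊆ Finset.range (N + 2) :=
            vars_D δ h0 hδadd D hDadd hDmul hDC hDX (N+1) _ ((vars_pderiv N P).trans hP)
          exact h1.trans (Finset.range_subset_range.mpr (by omega))
      · have h2 : (D r).vars ⊆ Finset.range (N + j + 2) :=
          vars_D δ h0 hδadd D hDadd hDmul hDC hDX (N+j+1) r hrv
        exact h2.trans (Finset.range_subset_range.mpr (by omega))

end DFormula2


section Elim
variable {R : Type*} [CommRing R] {σ : Type*} [DecidableEq σ]

/-- Elimination of the variable `t` using the relation `s * X t - r`, at the cost of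
multiplying by a power of `s`. -/
lemma eliminate_var (t : σ) (s r : MvPolynomial σ R) (hs : t ∉ s.vars) (hr : t ∉ r.vars) :
    ∀ (d : ℕ) (Q : MvPolynomial σ R), degreeOf t Q ≤ d →
      ∃ (e : ℕ) (Q₁ : MvPolynomial σ R),
        s ^ e * Q - Q₁ ∈ Ideal.span {s * X t - r} ∧
        Q₁.vars ⊆ (Q.vars ∪ s.vars ∪ r.vars) \ {t} := by
  intro d
  induction d with
  | zero =>
    intro Q hQ
    refine ⟨0, Q, by simp [Ideal.zero_mem], ?_⟩
    intro x hx
    rw [Finset.mem_sdiff, Finset.mem_singleton]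
    have ht : t ∉ Q.vars := (not_mem_vars_iff_degreeOf_eq_zero t Q).mpr (Nat.le_zero.mp hQ)
    exact ⟨Finset.mem_union_left _ (Finset.mem_union_left _ hx), fun h => ht (h ▸ hx)⟩
  | succ d ih =>
    intro Q hQ
    set Q₂ := Q.divMonomial (Finsupp.single t 1) with hQ₂
    set Q₃ := Q.modMonomial (Finsupp.single t 1) with hQ₃
    have hsplit : X t * Q₂ + Q₃ = Q := divMonomial_add_modMonomial_single Q t
    have hQ₃t : t ∉ Q₃.vars := by
      rw [mem_vars]
      push_neg
      intro m hm
      rw [Finsupp.mem_support_iff]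
      push_neg
      by_contra hc
      push_neg at hc
      have hle : Finsupp.single t 1 ≤ m := by
        rw [Finsupp.single_le_iff]
        omega
      rw [mem_support_iff, hQ₃, coeff_modMonomial_of_le _ hle] at hm
      exact hm rfl
    have hQ₃v : Q₃.vars ⊆ Q.vars := by
      intro x hx
      rw [mem_vars] at hx ⊢
      obtain ⟨m, hm, hxm⟩ := hx
      refine ⟨m, ?_, hxm⟩
      rw [mem_support_iff] at hm ⊢
      intro h
      by_cases hle : Finsupp.single t 1 ≤ m
      · exact hm (by rw [hQ₃, coeff_modMonomial_of_le _ hle])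
      · exact hm (by rw [hQ₃, coeff_modMonomial_of_not_le _ hle, h])
    have hQ₂v : Q₂.vars ⊆ Q.vars := by
      intro x hx
      rw [mem_vars] at hx ⊢
      obtain ⟨m, hm, hxm⟩ := hx
      refine ⟨Finsupp.single t 1 + m, ?_, ?_⟩
      · rw [mem_support_iff] at hm ⊢
        rw [hQ₂, coeff_divMonomial] at hm
        exact hm
      · rw [Finsupp.mem_support_iff] at hxm ⊢
        simp only [Finsupp.add_apply]
        omega
    have hQ₃d : degreeOf t Q₃ = 0 := (not_mem_vars_iff_degreeOf_eq_zero t Q₃).mp hQ₃t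
    have hQ₂d : degreeOf t Q₂ ≤ d := by
      by_cases h2 : Q₂ = 0
      · rw [h2, degreeOf_zero]; omega
      · have heq : Q₂ * X t = Q - Q₃ := by rw [← hsplit]; ring
        have h3 : degreeOf t (Q₂ * X t) = degreeOf t Q₂ + 1 :=
          (degreeOf_mul_X_eq_degreeOf_add_one_iff t Q₂).mpr h2
        have h4 : degreeOf t (Q - Q₃) ≤ d + 1 :=
          (degreeOf_sub_le t Q Q₃).trans (by rw [hQ₃d]; exact max_le hQ (by omega))
        rw [heq] at h3
        omega
    set Q' := r * Q₂ + s * Q₃ with hQ'def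
    have hQ'd : degreeOf t Q' ≤ d := by
      refine (degreeOf_add_le t _ _).trans (max_le ?_ ?_)
      · refine (degreeOf_mul_le t r Q₂).trans ?_
        rw [(not_mem_vars_iff_degreeOf_eq_zero t r).mp hr]
        omega
      · refine (degreeOf_mul_le t s Q₃).trans ?_
        rw [(not_mem_vars_iff_degreeOf_eq_zero t s).mp hs, hQ₃d]
        omega
    obtain ⟨e', Q₁, hmem, hvars⟩ := ih Q' hQ'd
    refine ⟨e' + 1, Q₁, ?_, ?_⟩
    · have key : s ^ (e' + 1) * Q - Q₁
          = s ^ e' * ((s * X t - r) * Q₂) + (s ^ e' * Q' - Q₁) := by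
        rw [hQ'def, ← hsplit]
        ring
      rw [key]
      exact Ideal.add_mem _
        (Ideal.mul_mem_left _ _ (Ideal.mul_mem_right _ _ (Ideal.subset_span rfl))) hmem
    · have hQ'v : Q'.vars ⊆ Q.vars ∪ s.vars ∪ r.vars := by
        rw [hQ'def]
        refine (vars_add_subset _ _).trans (Finset.union_subset ?_ ?_)
        · refine (vars_mul _ _).trans (Finset.union_subset ?_ ?_)
          · intro x hx
            exact Finset.mem_union_right _ hx
          · intro x hx
            exact Finset.mem_union_left _ (Finset.mem_union_left _ (hQ₂v hx))
        · refine (vars_mul _ _).trans (Finset.union_subset ?_ ?_)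
          · intro x hx
            exact Finset.mem_union_left _ (Finset.mem_union_right _ hx)
          · intro x hx
            exact Finset.mem_union_left _ (Finset.mem_union_left _ (hQ₃v hx))
      refine hvars.trans ?_
      intro x hx
      rw [Finset.mem_sdiff] at hx ⊢
      refine ⟨?_, hx.2⟩
      rcases Finset.mem_union.mp hx.1 with h | h
      · rcases Finset.mem_union.mp h with h' | h'
        · exact hQ'v h'
        · exact Finset.mem_union_left _ (Finset.mem_union_right _ h')
      · exact Finset.mem_union_right _ h

end Elim


section Separant
variable {k : Type*} [Field k] [CharZero k]

lemma pderiv_ne_zero_of_mem_vars {P : MvPolynomial ℕ k} {N : ℕ} (hord : N ∈ P.vars) :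
    pderiv N P ≠ 0 := by
  rw [mem_vars] at hord
  obtain ⟨m, hm, hNm⟩ := hord
  rw [Finsupp.mem_support_iff] at hNm
  intro h
  have hb : (m - Finsupp.single N 1) + Finsupp.single N 1 = m := by
    ext j
    rw [Finsupp.add_apply, Finsupp.tsub_apply]
    rcases eq_or_ne j N with rfl | hj
    · rw [Finsupp.single_eq_same]; omega
    · rw [Finsupp.single_eq_of_ne' (fun hh => hj hh.symm)]; omega
  have := coeff_pderiv N (m - Finsupp.single N 1) P
  rw [h, MvPolynomial.coeff_zero, hb] at this
  rw [mem_support_iff] at hm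
  have hmN : ((m - Finsupp.single N 1 : ℕ →₀ ℕ)) N + 1 = m N := by
    rw [Finsupp.tsub_apply, Finsupp.single_eq_same]; omega
  rw [hmN] at this
  have : ((m N : ℕ) : k) = 0 ∨ coeff m P = 0 := by
    rcases mul_eq_zero.mp this.symm with h' | h'
    · right; exact h'
    · left; exact h'
  rcases this with h' | h'
  · exact hNm (Nat.cast_eq_zero.mp h')
  · exact hm h'

lemma degreeOf_pderiv_lt {P : MvPolynomial ℕ k} {N : ℕ} (hord : N ∈ P.vars) :
    degreeOf N (pderiv N P) < degreeOf N P := by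
  have hpos : 0 < degreeOf N P := by
    rw [mem_vars] at hord
    obtain ⟨m, hm, hNm⟩ := hord
    rw [Finsupp.mem_support_iff] at hNm
    have := monomial_le_degreeOf N hm
    omega
  rw [degreeOf_lt_iff hpos]
  intro b hb
  rw [mem_support_iff, coeff_pderiv] at hb
  have hco : coeff (b + Finsupp.single N 1) P ≠ 0 := fun h => hb (by rw [h, zero_mul])
  have := monomial_le_degreeOf N (mem_support_iff.mpr hco)
  rw [Finsupp.add_apply, Finsupp.single_eq_same] at this
  omega

lemma not_dvd_pderiv {P : MvPolynomial ℕ k} {N : ℕ} (hord : N ∈ P.vars)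
    (hordmax : ∀ m ∈ P.vars, m ≤ N) : ¬ P ∣ pderiv N P := by
  rintro ⟨u, hu⟩
  set S := pderiv N P with hSdef
  have hS0 : S ≠ 0 := pderiv_ne_zero_of_mem_vars hord
  -- rename into finitely many variables, with variable `N` becoming variable `0`
  set e : Fin (N+1) → ℕ := fun j => N - (j : ℕ) with hedef
  have hinj : Function.Injective e := by
    intro a b hab
    have ha := a.isLt
    have hb := b.isLt
    apply Fin.ext
    simp only [hedef] at hab
    omega
  have hrange : ∀ n : ℕ, n ≤ N → n ∈ Set.range e := by
    intro n hn
    exact ⟨⟨N - n, by omega⟩, by simp only [hedef]; omega⟩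
  have hPv : ↑P.vars ⊆ Set.range e := fun n hn => hrange n (hordmax n hn)
  have hSv : ↑S.vars ⊆ Set.range e := fun n hn =>
    hrange n (hordmax n (vars_pderiv N P hn))
  obtain ⟨P', hP'⟩ := exists_rename_eq_of_vars_subset_range P e hinj hPv
  obtain ⟨S', hS'⟩ := exists_rename_eq_of_vars_subset_range S e hinj hSv
  set τ : MvPolynomial ℕ k →ₐ[k] MvPolynomial (Fin (N+1)) k :=
    aeval (fun i => if h : i ≤ N then X (⟨N - i, by omega⟩ : Fin (N+1)) else 0) with hτdef
  have hτe : ∀ q : MvPolynomial (Fin (N+1)) k, τ (rename e q) = q := by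
    intro q
    rw [hτdef, aeval_rename]
    have : ((fun i => if h : i ≤ N then X (⟨N - i, by omega⟩ : Fin (N+1)) else 0) ∘ e)
        = (X : Fin (N+1) → MvPolynomial (Fin (N+1)) k) := by
      funext j
      have hj := j.isLt
      simp only [Function.comp_apply, hedef]
      rw [dif_pos (by omega)]
      congr 1
      apply Fin.ext
      simp only []
      omega
    rw [this, aeval_X_left_apply]
  have hmul : S' = P' * τ u := by
    have := congrArg τ hu
    rw [← hP', ← hS', map_mul, hτe, hτe] at this
    exact this
  have hS'0 : S' ≠ 0 := fun h => hS0 (by rw [← hS', h, map_zero])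
  have hP'0 : P' ≠ 0 := fun h => hS0 (by
    rw [← hS', hmul, h, zero_mul, map_zero])
  have hu'0 : τ u ≠ 0 := fun h => hS'0 (by rw [hmul, h, mul_zero])
  have hdegS : degreeOf 0 S' = degreeOf N S := by
    have := degreeOf_rename_of_injective hinj (0 : Fin (N+1)) (p := S')
    rw [hS'] at this
    have he0 : e 0 = N := by simp [hedef]
    rw [he0] at this
    exact this.symm
  have hdegP : degreeOf 0 P' = degreeOf N P := by
    have := degreeOf_rename_of_injective hinj (0 : Fin (N+1)) (p := P')
    rw [hP'] at this
    have he0 : e 0 = N := by simp [hedef]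
    rw [he0] at this
    exact this.symm
  -- move to polynomials in one variable
  have hfS : (finSuccEquiv k N S') = (finSuccEquiv k N P') * (finSuccEquiv k N (τ u)) := by
    rw [hmul, map_mul]
  have hfP0 : finSuccEquiv k N P' ≠ 0 := fun h => hP'0 (by
    have := congrArg (finSuccEquiv k N).symm h
    rwa [AlgEquiv.symm_apply_apply, map_zero] at this)
  have hfu0 : finSuccEquiv k N (τ u) ≠ 0 := fun h => hu'0 (by
    have := congrArg (finSuccEquiv k N).symm h
    rwa [AlgEquiv.symm_apply_apply, map_zero] at this)
  have hnd := Polynomial.natDegree_mul hfP0 hfu0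
  rw [← hfS, natDegree_finSuccEquiv, natDegree_finSuccEquiv, natDegree_finSuccEquiv] at hnd
  rw [hdegS, hdegP] at hnd
  have hlt := degreeOf_pderiv_lt (k := k) hord
  rw [← hSdef] at hlt
  omega

end Separant


lemma eval₂_congr_vars {R S σ : Type*} [CommSemiring R] [CommSemiring S]
    (f : R →+* S) (g₁ g₂ : σ → S) (p : MvPolynomial σ R)
    (h : ∀ i ∈ p.vars, g₁ i = g₂ i) :
    MvPolynomial.eval₂ f g₁ p = MvPolynomial.eval₂ f g₂ p := by
  have := MvPolynomial.eval₂Hom_congr' (f₁ := f) (f₂ := f) (g₁ := g₁) (g₂ := g₂)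
    (p₁ := p) (p₂ := p) rfl (fun i hi _ => h i hi) rfl
  simpa using this

end SepSat

set_option maxHeartbeats 2000000 in
set_option synthInstance.maxHeartbeats 1000000 in
/-- For an irreducible differential polynomial `P` of order `N ≥ 0` in the
differential polynomial ring `k{x}` (modelled as `MvPolynomial ℕ k`, where the variable
`n` stands for `x^(n)`, with derivation `D` extending the derivation `δ` of `k` and
sending `x^(n)` to `x^(n+1)`), the set `I(P) = {Q | ∃ m, S_P ^ m * Q ∈ ⟨P⟩}` is the
smallest prime differential ideal of `k{x}` containing `P` and not containing the
separant `S_P = ∂P/∂x^(N)`; here `⟨P⟩` is the smallest differential ideal containing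
`P`, i.e. the ideal spanned by the iterated derivatives of `P`. -/
theorem separant_saturation_is_smallest_prime_differential_ideal
    {k : Type*} [Field k] [CharZero k]
    (δ : k → k)
    (hδadd : ∀ x y, δ (x + y) = δ x + δ y)
    (hδmul : ∀ x y, δ (x * y) = x * δ y + y * δ x)
    (D : MvPolynomial ℕ k → MvPolynomial ℕ k)
    (hDadd : ∀ p q, D (p + q) = D p + D q)
    (hDmul : ∀ p q, D (p * q) = p * D q + q * D p)
    (hDC : ∀ a : k, D (C a) = C (δ a))
    (hDX : ∀ n : ℕ, D (X n) = X (n + 1))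
    (P : MvPolynomial ℕ k) (hPirr : Irreducible P)
    (N : ℕ) (hord : N ∈ P.vars) (hordmax : ∀ m ∈ P.vars, m ≤ N) :
    ∃ I : Ideal (MvPolynomial ℕ k),
      (I : Set (MvPolynomial ℕ k)) =
        {Q | ∃ m : ℕ, (pderiv N P) ^ m * Q ∈ Ideal.span {R | ∃ j : ℕ, R = D^[j] P}} ∧
      I.IsPrime ∧
      (∀ Q ∈ I, D Q ∈ I) ∧
      P ∈ I ∧
      pderiv N P ∉ I ∧
      (∀ J : Ideal (MvPolynomial ℕ k), J.IsPrime → (∀ Q ∈ J, D Q ∈ J) →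
        P ∈ J → pderiv N P ∉ J → I ≤ J) := by
  classical
  -- basic consequences of the axioms
  have h0 : δ 0 = 0 := by
    have h := hδadd 0 0
    rw [add_zero] at h
    exact (left_eq_add.mp h)
  have hD0 : D 0 = 0 := by
    have h := hDadd 0 0
    rw [add_zero] at h
    exact (left_eq_add.mp h)
  have hD1 : D 1 = 0 := by
    have h := hDmul 1 1
    simp only [mul_one, one_mul] at h
    exact (left_eq_add.mp h)
  set S := pderiv N P with hSdef
  set SS := Ideal.span {R : MvPolynomial ℕ k | ∃ j : ℕ, R = D^[j] P} with hSSdef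
  have hPvars : P.vars ⊆ Finset.range (N + 1) := by
    intro x hx
    exact Finset.mem_range.mpr (by have := hordmax x hx; omega)
  have hSvars : S.vars ⊆ Finset.range (N + 1) := (SepSat.vars_pderiv N P).trans hPvars
  -- structure of iterated derivatives
  have hstruct := SepSat.D_iterate_structure δ h0 hδadd D hDadd hDmul hDC hDX P N hPvars
  set ρ : ℕ → MvPolynomial ℕ k := fun j => (hstruct j).choose with hρdef
  have hρ1 : ∀ j : ℕ, D^[j+1] P = S * X (N + j + 1) + ρ j := fun j => (hstruct j).choose_spec.1
  have hρ2 : ∀ j : ℕ, (ρ j).vars ⊆ Finset.range (N + j + 1) := fun j =>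
    (hstruct j).choose_spec.2
  -- generators of SS are in SS, and SS is a differential ideal
  have hPgen : P ∈ SS := Ideal.subset_span ⟨0, rfl⟩
  have hgenSS : ∀ j : ℕ, D^[j] P ∈ SS := fun j => Ideal.subset_span ⟨j, rfl⟩
  have hSSD : ∀ Q ∈ SS, D Q ∈ SS := by
    intro Q hQ
    induction hQ using Submodule.span_induction with
    | mem x hx =>
      obtain ⟨j, rfl⟩ := hx
      exact Ideal.subset_span ⟨j + 1, (Function.iterate_succ_apply' D j P).symm⟩
    | zero => rw [hD0]; exact Ideal.zero_mem _
    | add x y hx hy ihx ihy => rw [hDadd]; exact Ideal.add_mem _ ihx ihy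
    | smul a x hx ih =>
      rw [smul_eq_mul, hDmul]
      exact Ideal.add_mem _ (Ideal.mul_mem_left _ _ ih) (Ideal.mul_mem_right _ _ hx)
  -- the prime ideal (P) and the fraction field of the quotient
  have hP0 : P ≠ 0 := hPirr.ne_zero
  have hPprime : Prime P := hPirr.prime
  have hpPrime : (Ideal.span {P} : Ideal (MvPolynomial ℕ k)).IsPrime :=
    (Ideal.span_singleton_prime hP0).mpr hPprime
  haveI := hpPrime
  set F := FractionRing (MvPolynomial ℕ k ⧸ Ideal.span {P}) with hFdef
  set φ : MvPolynomial ℕ k →+* F :=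
    (algebraMap (MvPolynomial ℕ k ⧸ Ideal.span {P}) F).comp
      (Ideal.Quotient.mk (Ideal.span {P})) with hφdef
  have hφker : ∀ x : MvPolynomial ℕ k, φ x = 0 ↔ x ∈ Ideal.span {P} := by
    intro x
    rw [hφdef, RingHom.comp_apply]
    rw [IsFractionRing.to_map_eq_zero_iff]
    exact Ideal.Quotient.eq_zero_iff_mem
  have hSnotp : S ∉ Ideal.span {P} := by
    rw [Ideal.mem_span_singleton]
    exact SepSat.not_dvd_pderiv hord hordmax
  have hφS : φ S ≠ 0 := fun h => hSnotp ((hφker S).mp h)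
  -- the substitution homomorphism ψ
  set v : ℕ → F := SepSat.solveRec N (fun n => φ (X n)) (φ S)⁻¹ (φ.comp C)
    (fun i => ρ (i - 1)) with hvdef
  have hvlow : ∀ n : ℕ, n ≤ N → v n = φ (X n) := by
    intro n h
    rw [hvdef, SepSat.solveRec, dif_pos h]
  set ψ : MvPolynomial ℕ k →+* F := eval₂Hom (φ.comp C) v with hψdef
  have hψX : ∀ n : ℕ, ψ (X n) = v n := by
    intro n
    rw [hψdef]
    exact eval₂Hom_X' _ _ _
  have hψlow : ∀ Q : MvPolynomial ℕ k, Q.vars ⊆ Finset.range (N + 1) → ψ Q = φ Q := by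
    intro Q hQ
    refine MvPolynomial.hom_congr_vars ?_ ?_ rfl
    · ext a
      simp only [RingHom.comp_apply, hψdef, eval₂Hom_C]
    · intro i hi _
      rw [hψX, hvlow i (by have := Finset.mem_range.mp (hQ hi); omega)]
  have hψP : ψ P = 0 := by
    rw [hψlow P hPvars]
    exact (hφker P).mpr (Ideal.subset_span rfl)
  have hψS : ψ S ≠ 0 := by
    rw [hψlow S hSvars]
    exact hφS
  have hv_high : ∀ j : ℕ, φ S * v (N + j + 1) = - ψ (ρ j) := by
    intro j
    have hne : ¬ (N + j + 1 ≤ N) := by omega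
    have hidx : N + j + 1 - N = j + 1 := by omega
    have hcongr : MvPolynomial.eval₂ (φ.comp C)
        (fun m => if _ : m < N + j + 1 then v m else 0) (ρ j) = ψ (ρ j) := by
      have h1 : ψ (ρ j) = MvPolynomial.eval₂ (φ.comp C) v (ρ j) := by
        rw [hψdef]; rfl
      rw [h1]
      refine SepSat.eval₂_congr_vars _ _ _ _ ?_
      intro i hi
      exact dif_pos (Finset.mem_range.mp (hρ2 j hi))
    rw [hvdef, SepSat.solveRec, dif_neg hne, ← hvdef, hidx]
    have hj1 : j + 1 - 1 = j := rfl
    rw [hj1, hcongr]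
    have hring : φ S * (-(φ S)⁻¹ * ψ (ρ j)) = -(φ S * (φ S)⁻¹ * ψ (ρ j)) := by ring
    rw [hring, mul_inv_cancel₀ hφS, one_mul]
  have hψgen : ∀ j : ℕ, ψ (D^[j] P) = 0 := by
    intro j
    cases j with
    | zero => simpa using hψP
    | succ j =>
      rw [hρ1 j, map_add, map_mul, hψX, hψlow S hSvars, hv_high j, neg_add_cancel]
  have hSSker : SS ≤ RingHom.ker ψ := by
    rw [hSSdef, Ideal.span_le]
    rintro R ⟨j, rfl⟩
    exact RingHom.mem_ker.mpr (hψgen j)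
  -- the reduction lemma
  have hred : ∀ (M : ℕ) (Q : MvPolynomial ℕ k), Q.vars ⊆ Finset.range (N + 1 + M) →
      ∃ (m : ℕ) (Q₀ : MvPolynomial ℕ k), Q₀.vars ⊆ Finset.range (N + 1) ∧
        S ^ m * Q - Q₀ ∈ SS := by
    intro M
    induction M with
    | zero =>
      intro Q hQ
      exact ⟨0, Q, by simpa using hQ, by simp [Ideal.zero_mem]⟩
    | succ M ih =>
      intro Q hQ
      have hsT : (N + 1 + M) ∉ S.vars := fun h => by
        have := Finset.mem_range.mp (hSvars h); omega
      have hrT : (N + 1 + M) ∉ (-(ρ M)).vars := fun h => by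
        rw [vars_neg] at h
        have := Finset.mem_range.mp (hρ2 M h); omega
      obtain ⟨e, Q₁, hmem, hvars⟩ :=
        SepSat.eliminate_var (N + 1 + M) S (-(ρ M)) hsT hrT (degreeOf (N + 1 + M) Q) Q le_rfl
      have hrel : S * X (N + 1 + M) - -(ρ M) = D^[M+1] P := by
        rw [hρ1 M]
        have : N + M + 1 = N + 1 + M := by omega
        rw [this]
        ring
      have hspan : Ideal.span {S * X (N + 1 + M) - -(ρ M)} ≤ SS := by
        rw [Ideal.span_le, hrel]
        intro x hx
        rw [Set.mem_singleton_iff] at hx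
        subst hx
        exact hgenSS (M + 1)
      have hQ₁v : Q₁.vars ⊆ Finset.range (N + 1 + M) := by
        intro x hx
        have h1 := hvars hx
        rw [Finset.mem_sdiff, Finset.mem_singleton] at h1
        obtain ⟨h2, h3⟩ := h1
        rw [Finset.mem_range]
        rcases Finset.mem_union.mp h2 with h4 | h4
        · rcases Finset.mem_union.mp h4 with h5 | h5
          · have := Finset.mem_range.mp (hQ h5); omega
          · have := Finset.mem_range.mp (hSvars h5); omega
        · rw [vars_neg] at h4
          have := Finset.mem_range.mp (hρ2 M h4); omega
      obtain ⟨m', Q₀, hQ₀v, hmem'⟩ := ih Q₁ hQ₁v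
      refine ⟨m' + e, Q₀, hQ₀v, ?_⟩
      have key : S ^ (m' + e) * Q - Q₀
          = S ^ m' * (S ^ e * Q - Q₁) + (S ^ m' * Q₁ - Q₀) := by
        rw [pow_add]; ring
      rw [key]
      exact Ideal.add_mem _ (Ideal.mul_mem_left _ _ (hspan hmem)) hmem'
  -- the key membership characterisation : ker ψ = saturation of SS by S
  have hmemIff : ∀ Q : MvPolynomial ℕ k, ψ Q = 0 ↔ ∃ m : ℕ, S ^ m * Q ∈ SS := by
    intro Q
    constructor
    · intro hQ0
      have hQv : Q.vars ⊆ Finset.range (N + 1 + (Q.vars.sup id + 1)) := by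
        intro x hx
        have : x ≤ Q.vars.sup id := Finset.le_sup (f := id) hx
        rw [Finset.mem_range]
        omega
      obtain ⟨m, Q₀, hQ₀v, hmem⟩ := hred (Q.vars.sup id + 1) Q hQv
      have h1 : ψ (S ^ m * Q - Q₀) = 0 := hSSker hmem
      rw [map_sub, map_mul, map_pow, hQ0, mul_zero, zero_sub, neg_eq_zero] at h1
      have h3 : φ Q₀ = 0 := by rw [← hψlow Q₀ hQ₀v]; exact h1
      have h4 : Q₀ ∈ Ideal.span {P} := (hφker Q₀).mp h3
      have h5 : Q₀ ∈ SS := by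
        have : Ideal.span {P} ≤ SS := by
          rw [Ideal.span_le]
          intro x hx
          rw [Set.mem_singleton_iff] at hx
          subst hx
          exact hPgen
        exact this h4
      refine ⟨m, ?_⟩
      have : S ^ m * Q = (S ^ m * Q - Q₀) + Q₀ := by ring
      rw [this]
      exact Ideal.add_mem _ hmem h5
    · rintro ⟨m, hm⟩
      have h1 : ψ (S ^ m * Q) = 0 := hSSker hm
      rw [map_mul, map_pow] at h1
      rcases mul_eq_zero.mp h1 with h2 | h2
      · exact absurd h2 (pow_ne_zero m hψS)
      · exact h2
  -- assemble the answer
  refine ⟨RingHom.ker ψ, ?_, ?_, ?_, ?_, ?_, ?_⟩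
  · ext Q
    simp only [SetLike.mem_coe, RingHom.mem_ker, Set.mem_setOf_eq]
    rw [hmemIff Q]
  · exact RingHom.ker_isPrime ψ
  · intro Q hQ
    rw [RingHom.mem_ker] at hQ ⊢
    rw [hmemIff] at hQ ⊢
    obtain ⟨m, hm⟩ := hQ
    refine ⟨m + 1, ?_⟩
    have key : S ^ (m + 1) * D Q = S * D (S ^ m * Q) - S * Q * D (S ^ m) := by
      rw [hDmul]; ring
    rw [key]
    refine Ideal.sub_mem _ (Ideal.mul_mem_left _ _ (hSSD _ hm)) ?_
    cases m with
    | zero =>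
      rw [pow_zero, hD1, mul_zero]
      exact Ideal.zero_mem _
    | succ m' =>
      have hDpow : ∀ (x : MvPolynomial ℕ k) (n : ℕ),
          D (x ^ (n + 1)) = ((n + 1 : ℕ) : MvPolynomial ℕ k) * (x ^ n * D x) := by
        intro x n
        induction n with
        | zero => simp [pow_one]
        | succ n ihn =>
          rw [pow_succ, hDmul, ihn]
          push_cast
          ring
      rw [hDpow S m']
      have : S * Q * (((m' + 1 : ℕ) : MvPolynomial ℕ k) * (S ^ m' * D S))
          = ((m' + 1 : ℕ) : MvPolynomial ℕ k) * D S * (S ^ (m' + 1) * Q) := by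
        ring
      rw [this]
      exact Ideal.mul_mem_left _ _ hm
  · exact RingHom.mem_ker.mpr hψP
  · intro h
    exact hψS (RingHom.mem_ker.mp h)
  · intro J hJprime hJdiff hPJ hSJ
    intro x hx
    rw [RingHom.mem_ker, hmemIff] at hx
    obtain ⟨m, hm⟩ := hx
    have hgenJ : ∀ j : ℕ, D^[j] P ∈ J := by
      intro j
      induction j with
      | zero => simpa using hPJ
      | succ j ihj =>
        rw [Function.iterate_succ_apply']
        exact hJdiff _ ihj
    have hSSJ : SS ≤ J := by
      rw [hSSdef, Ideal.span_le]
      rintro R ⟨j, rfl⟩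
      exact hgenJ j
    have hSmx : S ^ m * x ∈ J := hSSJ hm
    rcases hJprime.mem_or_mem hSmx with h | h
    · exact absurd (hJprime.mem_of_pow_mem m h) hSJ
    · exact h
end

section
/- Let K be a differential field of characteristic zero with field of constants C. Elements y₁, …, yₙ of K are linearly dependent over C if and only if their Wronskian W(y₁,…,yₙ) is zero. -/
/-- Auxiliary: the hard direction (vanishing Wronskian implies dependence over
constants), proved by induction on `n`. -/
theorem wronskian_aux {K : Type*} [Field K]
    (δ : K → K)
    (hadd : ∀ x y, δ (x + y) = δ x + δ y)
    (hmul : ∀ x y, δ (x * y) = x * δ y + y * δ x) :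
    ∀ (n : ℕ) (y : Fin n → K),
      Matrix.det (Matrix.of fun i j : Fin n => δ^[(i : ℕ)] (y j)) = 0 →
      ∃ c : Fin n → K, (∀ i, δ (c i) = 0) ∧ c ≠ 0 ∧ ∑ i, c i * y i = 0 := by
  have hsum : ∀ {m : ℕ} (f : Fin m → K), δ (∑ i, f i) = ∑ i, δ (f i) :=
    fun f => map_sum (AddMonoidHom.mk' δ hadd) f Finset.univ
  have h0 : δ 0 = 0 := (AddMonoidHom.mk' δ hadd).map_zero
  have h1 : δ 1 = 0 := by
    have h := hmul 1 1
    rw [mul_one, one_mul] at h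
    exact (right_eq_add.mp h)
  intro n
  induction n with
  | zero =>
    intro y hdet
    simp [Matrix.det_fin_zero] at hdet
  | succ n ih =>
    intro y hdet
    by_cases hW :
        Matrix.det (Matrix.of fun i j : Fin n => δ^[(i : ℕ)] (y (Fin.castSucc j))) = 0
    · obtain ⟨c, hc, hc0, hcy⟩ := ih (fun j => y (Fin.castSucc j)) hW
      refine ⟨Fin.snoc c 0, ?_, ?_, ?_⟩
      · intro i
        refine Fin.lastCases ?_ (fun j => ?_) i
        · rw [Fin.snoc_last]; exact h0
        · rw [Fin.snoc_castSucc]; exact hc j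
      · intro h
        apply hc0
        funext j
        have := congrFun h (Fin.castSucc j)
        rwa [Fin.snoc_castSucc] at this
      · rw [Fin.sum_univ_castSucc]
        simp only [Fin.snoc_castSucc, Fin.snoc_last, zero_mul, add_zero]
        exact hcy
    · -- main case: the smaller Wronskian is nonzero
      obtain ⟨v, hv0, hv⟩ := (Matrix.exists_mulVec_eq_zero_iff).mpr hdet
      have hvE : ∀ i : Fin (n + 1), ∑ j, δ^[(i : ℕ)] (y j) * v j = 0 := by
        intro i
        have := congrFun hv i
        simpa [Matrix.mulVec, dotProduct] using this
      have hvlast : v (Fin.last n) ≠ 0 := by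
        intro h
        apply hW
        rw [← Matrix.exists_mulVec_eq_zero_iff]
        refine ⟨fun j => v (Fin.castSucc j), ?_, ?_⟩
        · intro hz
          apply hv0
          funext j
          refine Fin.lastCases h (fun i => ?_) j
          exact congrFun hz i
        · funext i
          have := hvE (Fin.castSucc i)
          rw [Fin.sum_univ_castSucc, h, mul_zero, add_zero] at this
          simpa [Matrix.mulVec, dotProduct] using this
      set c : Fin (n + 1) → K := fun j => v j * (v (Fin.last n))⁻¹ with hc_def
      have hclast : c (Fin.last n) = 1 := mul_inv_cancel₀ hvlast
      have hcE : ∀ i : Fin (n + 1), ∑ j, δ^[(i : ℕ)] (y j) * c j = 0 := by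
        intro i
        have : ∑ j, δ^[(i : ℕ)] (y j) * c j
            = (∑ j, δ^[(i : ℕ)] (y j) * v j) * (v (Fin.last n))⁻¹ := by
          rw [Finset.sum_mul]
          exact Finset.sum_congr rfl fun j _ => by rw [hc_def, mul_assoc]
        rw [this, hvE i, zero_mul]
      have hdE : ∀ i : Fin n, ∑ j : Fin (n + 1), δ^[(i : ℕ)] (y j) * δ (c j) = 0 := by
        intro i
        have e1 : ∑ j, δ^[(i : ℕ)] (y j) * c j = 0 := by
          simpa using hcE (Fin.castSucc i)
        have e2 : ∑ j, δ^[(i : ℕ) + 1] (y j) * c j = 0 := by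
          simpa using hcE (Fin.succ i)
        have hd := hsum (fun j => δ^[(i : ℕ)] (y j) * c j)
        rw [e1, h0] at hd
        have expand : ∀ j, δ (δ^[(i : ℕ)] (y j) * c j)
            = δ^[(i : ℕ)] (y j) * δ (c j) + δ^[(i : ℕ) + 1] (y j) * c j := by
          intro j
          rw [hmul, Function.iterate_succ_apply']
          ring
        rw [Finset.sum_congr rfl (fun j _ => expand j), Finset.sum_add_distrib, e2,
          add_zero] at hd
        exact hd.symm
      have hlast0 : δ (c (Fin.last n)) = 0 := by rw [hclast]; exact h1
      have hrest : ∀ j : Fin n, δ (c (Fin.castSucc j)) = 0 := by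
        by_contra hne
        push_neg at hne
        obtain ⟨j0, hj0⟩ := hne
        apply hW
        rw [← Matrix.exists_mulVec_eq_zero_iff]
        refine ⟨fun j => δ (c (Fin.castSucc j)), ?_, ?_⟩
        · intro hz
          exact hj0 (congrFun hz j0)
        · funext i
          have := hdE i
          rw [Fin.sum_univ_castSucc, hlast0, mul_zero, add_zero] at this
          simpa [Matrix.mulVec, dotProduct] using this
      refine ⟨c, fun i => Fin.lastCases hlast0 hrest i, ?_, ?_⟩
      · intro h
        have := congrFun h (Fin.last n)
        rw [hclast] at this
        exact one_ne_zero this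
      · have := hcE 0
        simpa [mul_comm] using this

/-- In a differential field `K` of characteristic zero with derivation `δ`
and field of constants `C = {c | δ c = 0}`, elements `y₁, …, yₙ` are linearly dependent
over `C` if and only if their Wronskian (the determinant of the matrix whose `(i,j)`
entry is the `(i-1)`-st derivative of `y_j`) vanishes. -/
theorem linearDependent_over_constants_iff_wronskian_eq_zero
    {K : Type*} [Field K] [CharZero K]
    (δ : K → K)
    (hadd : ∀ x y, δ (x + y) = δ x + δ y)
    (hmul : ∀ x y, δ (x * y) = x * δ y + y * δ x)
    (n : ℕ) (y : Fin n → K) :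
    (∃ c : Fin n → K, (∀ i, δ (c i) = 0) ∧ c ≠ 0 ∧ ∑ i, c i * y i = 0) ↔
      Matrix.det (Matrix.of fun i j : Fin n => δ^[(i : ℕ)] (y j)) = 0 := by
  have hsum : ∀ {m : ℕ} (f : Fin m → K), δ (∑ i, f i) = ∑ i, δ (f i) :=
    fun f => map_sum (AddMonoidHom.mk' δ hadd) f Finset.univ
  have h0 : δ 0 = 0 := (AddMonoidHom.mk' δ hadd).map_zero
  constructor
  · rintro ⟨c, hc, hc0, hcy⟩
    rw [← Matrix.exists_mulVec_eq_zero_iff]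
    have key : ∀ k : ℕ, ∑ j, δ^[k] (y j) * c j = 0 := by
      intro k
      induction k with
      | zero => simpa [mul_comm] using hcy
      | succ k ihk =>
        have hd := hsum (fun j => δ^[k] (y j) * c j)
        rw [ihk, h0] at hd
        have expand : ∀ j, δ (δ^[k] (y j) * c j) = δ^[k + 1] (y j) * c j := by
          intro j
          rw [hmul, hc j, mul_zero, zero_add, Function.iterate_succ_apply', mul_comm]
        rw [Finset.sum_congr rfl (fun j _ => expand j)] at hd
        exact hd.symm
    refine ⟨c, hc0, ?_⟩
    funext i
    simpa [Matrix.mulVec, dotProduct] using key (i : ℕ)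
  · exact wronskian_aux δ hadd hmul n y
end

section
/- Let K be a differential field of characteristic zero with field of constants C, and let u be an element of a differential field extension of K with u' = a ∈ K, where a is not a derivative in K (there is no b ∈ K with b' = a). Then u is transcendental over K; moreover, if K(u) has the same field of constants as K, then the differential Galois group of K(u)/K is isomorphic to the additive group (C, +) of the constants of K. -/
/-- The differential Galois group of a differential field extension `ι : K →+* M`
(with derivation `δM` on `M`): the group of field automorphisms of `M` fixing the image
of `K` pointwise and commuting with the derivation. -/
def diffGaloisGroup {K M : Type*} [Field K] [Field M] (ι : K →+* M) (δM : M → M) :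
    Subgroup (RingAut M) where
  carrier := {σ | (∀ c : K, σ (ι c) = ι c) ∧ ∀ x : M, σ (δM x) = δM (σ x)}
  one_mem' := ⟨fun _ => rfl, fun _ => rfl⟩
  mul_mem' := by
    rintro σ τ ⟨hσ1, hσ2⟩ ⟨hτ1, hτ2⟩
    refine ⟨fun c => ?_, fun x => ?_⟩
    · show σ (τ (ι c)) = ι c
      rw [hτ1, hσ1]
    · show σ (τ (δM x)) = δM (σ (τ x))
      rw [hτ2, hσ2]
  inv_mem' := by
    rintro σ ⟨h1, h2⟩
    refine ⟨fun c => ?_, fun x => ?_⟩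
    · exact σ.injective (by
        show σ (σ.symm (ι c)) = σ (ι c)
        rw [RingEquiv.apply_symm_apply, h1])
    · exact σ.injective (by
        show σ (σ.symm (δM x)) = σ (δM (σ.symm x))
        rw [RingEquiv.apply_symm_apply, h2, RingEquiv.apply_symm_apply])

/-- The additive group of constants of a differential field `(K, δ)`. -/
def constantsAddSubgroup {K : Type*} [Field K] (δ : K → K)
    (hadd : ∀ x y, δ (x + y) = δ x + δ y) : AddSubgroup K where
  carrier := {x | δ x = 0}
  zero_mem' := by
    have h := hadd 0 0
    rw [add_zero] at h
    exact (left_eq_add.mp h)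
  add_mem' := by
    intro a b ha hb
    show δ (a + b) = 0
    rw [hadd, ha, hb, add_zero]
  neg_mem' := by
    intro a ha
    have h0 : δ 0 = 0 := by
      have h := hadd 0 0
      rw [add_zero] at h
      exact (left_eq_add.mp h)
    have h := hadd a (-a)
    rw [add_neg_cancel, h0, ha, zero_add] at h
    exact h.symm


open Polynomial

section DerLemmas

variable {F : Type*} [Field F] {δ : F → F}

theorem der_zero (hadd : ∀ x y, δ (x + y) = δ x + δ y) : δ 0 = 0 := by
  have h := hadd 0 0; rw [add_zero] at h; exact (left_eq_add.mp h)

theorem der_neg (hadd : ∀ x y, δ (x + y) = δ x + δ y) (x : F) : δ (-x) = -δ x := by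
  have h := hadd x (-x)
  rw [add_neg_cancel, der_zero hadd] at h
  linear_combination -h

theorem der_sub (hadd : ∀ x y, δ (x + y) = δ x + δ y) (x y : F) : δ (x - y) = δ x - δ y := by
  rw [sub_eq_add_neg, hadd, der_neg hadd, sub_eq_add_neg]

theorem der_one (hmul : ∀ x y, δ (x * y) = x * δ y + y * δ x) : δ 1 = 0 := by
  have h := hmul 1 1
  simp only [mul_one, one_mul] at h
  exact (right_eq_add.mp h)

theorem der_natCast (hadd : ∀ x y, δ (x + y) = δ x + δ y)
    (hmul : ∀ x y, δ (x * y) = x * δ y + y * δ x) (n : ℕ) : δ (n : F) = 0 := by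
  induction n with
  | zero => simpa using der_zero hadd
  | succ k ih => push_cast; rw [hadd, ih, der_one hmul, add_zero]

theorem der_pow (hmul : ∀ x y, δ (x * y) = x * δ y + y * δ x) (x : F) (n : ℕ) :
    δ (x ^ n) = (n : F) * x ^ (n - 1) * δ x := by
  induction n with
  | zero => simp [der_one hmul]
  | succ k ih =>
    rw [pow_succ, hmul, ih]
    rcases Nat.eq_zero_or_pos k with hk | hk
    · subst hk; simp
    · have hxk : x * x ^ (k - 1) = x ^ k := by rw [← pow_succ']; congr 1; omega
      have h2 : x ^ k * δ x + x * ((k : F) * x ^ (k - 1) * δ x)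
          = ((k : F) + 1) * x ^ k * δ x := by
        rw [show x * ((k : F) * x ^ (k - 1) * δ x) = (k : F) * (x * x ^ (k-1)) * δ x by ring,
          hxk]
        ring
      rw [h2]
      push_cast
      simp [Nat.succ_sub_one]

theorem der_inv (hadd : ∀ x y, δ (x + y) = δ x + δ y)
    (hmul : ∀ x y, δ (x * y) = x * δ y + y * δ x) (x : F) (hx : x ≠ 0) :
    δ x⁻¹ = -(x⁻¹ * x⁻¹ * δ x) := by
  have h := hmul x x⁻¹
  rw [mul_inv_cancel₀ hx, der_one hmul] at h
  have h2 : x * δ x⁻¹ = -(x⁻¹ * δ x) := by linear_combination -h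
  have := congrArg (fun t => x⁻¹ * t) h2
  simpa [mul_assoc, inv_mul_cancel_left₀ hx, mul_comm, mul_left_comm] using this

theorem der_finsetSum (hadd : ∀ x y, δ (x + y) = δ x + δ y) {α : Type*} (s : Finset α)
    (f : α → F) : δ (∑ i ∈ s, f i) = ∑ i ∈ s, δ (f i) := by
  classical
  induction s using Finset.induction_on with
  | empty => simpa using der_zero hadd
  | insert x s hx ih => rw [Finset.sum_insert hx, Finset.sum_insert hx, hadd, ih]

end DerLemmas

section CoeffDeriv

open Polynomial

variable {K : Type*} [Field K]

/-- Coefficientwise application of a derivation to a polynomial. -/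
noncomputable def coeffDeriv (δ : K → K) (p : K[X]) : K[X] :=
  p.sum fun n c => monomial n (δ c)

variable {δ : K → K}

theorem coeffDeriv_coeff (hadd : ∀ x y, δ (x + y) = δ x + δ y) (p : K[X]) (k : ℕ) :
    (coeffDeriv δ p).coeff k = δ (p.coeff k) := by
  classical
  rw [coeffDeriv, coeff_sum, Polynomial.sum_def]
  simp only [coeff_monomial]
  rw [Finset.sum_ite_eq' p.support k fun n => δ (p.coeff n)]
  split_ifs with h
  · rfl
  · rw [notMem_support_iff.mp h, der_zero hadd]

theorem coeffDeriv_natDegree_le (hadd : ∀ x y, δ (x + y) = δ x + δ y) (p : K[X]) : (coeffDeriv δ p).natDegree ≤ p.natDegree := by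
  rw [natDegree_le_iff_coeff_eq_zero]
  intro N hN
  rw [coeffDeriv_coeff hadd, coeff_eq_zero_of_natDegree_lt hN, der_zero hadd]

theorem coeffDeriv_monomial (hadd : ∀ x y, δ (x + y) = δ x + δ y) (n : ℕ) (c : K) :
    coeffDeriv δ (monomial n c) = monomial n (δ c) := by
  rw [coeffDeriv]
  exact sum_monomial_index c _ (by rw [der_zero hadd, monomial_zero_right])

theorem coeffDeriv_add (hadd : ∀ x y, δ (x + y) = δ x + δ y) (p q : K[X]) :
    coeffDeriv δ (p + q) = coeffDeriv δ p + coeffDeriv δ q := by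
  rw [coeffDeriv, coeffDeriv, coeffDeriv, sum_add_index]
  · intro i; rw [der_zero hadd, monomial_zero_right]
  · intro a b₁ b₂; rw [hadd, map_add]

end CoeffDeriv

section EvalDeriv

open Polynomial

variable {K M : Type*} [Field K] [Field M]
  {δK : K → K} {δM : M → M} (ι : K →+* M) (u : M)
  (hKadd : ∀ x y, δK (x + y) = δK x + δK y)
  (hMadd : ∀ x y, δM (x + y) = δM x + δM y)
  (hMmul : ∀ x y, δM (x * y) = x * δM y + y * δM x)
  (hcompat : ∀ c : K, δM (ι c) = ι (δK c))

include hKadd hMadd hMmul hcompat in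
theorem der_eval₂ (p : K[X]) :
    δM (p.eval₂ ι u) =
      (coeffDeriv δK p).eval₂ ι u + (derivative p).eval₂ ι u * δM u := by
  induction p using Polynomial.induction_on' with
  | add p q hp hq =>
    rw [eval₂_add, hMadd, hp, hq, coeffDeriv_add hKadd, eval₂_add, derivative_add, eval₂_add]
    ring
  | monomial n c =>
    rw [eval₂_monomial, hMmul, der_pow hMmul, hcompat,
      coeffDeriv_monomial hKadd, eval₂_monomial, derivative_monomial, eval₂_monomial,
      map_mul, map_natCast]
    push_cast
    ring

end EvalDeriv

section Transcendence

open Polynomial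

variable {K M : Type*} [Field K] [CharZero K] [Field M]

theorem transcendental_of_not_deriv
    (δK : K → K)
    (hKadd : ∀ x y, δK (x + y) = δK x + δK y)
    (hKmul : ∀ x y, δK (x * y) = x * δK y + y * δK x)
    (ι : K →+* M) (δM : M → M)
    (hMadd : ∀ x y, δM (x + y) = δM x + δM y)
    (hMmul : ∀ x y, δM (x * y) = x * δM y + y * δM x)
    (hcompat : ∀ c : K, δM (ι c) = ι (δK c))
    (a : K) (u : M)
    (hu : δM u = ι a)
    (hnotderiv : ¬∃ b : K, δK b = a) :
    ∀ p : Polynomial K, p ≠ 0 → Polynomial.eval₂ ι u p ≠ 0 := by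
  suffices H : ∀ n : ℕ, ∀ p : K[X], p.natDegree = n → p ≠ 0 → Polynomial.eval₂ ι u p ≠ 0 by
    intro p hp
    exact H p.natDegree p rfl hp
  intro n
  induction n using Nat.strong_induction_on with
  | _ n ih =>
    intro p hdeg hp0 heval
    rcases Nat.eq_zero_or_pos n with hn0 | hn1
    · subst hn0
      rw [eq_C_of_natDegree_eq_zero hdeg, eval₂_C] at heval
      have : p.coeff 0 = 0 := ι.injective (by simpa using heval)
      exact hp0 (by rw [eq_C_of_natDegree_eq_zero hdeg, this, map_zero])
    -- normalize to monic
    have hlc : p.leadingCoeff ≠ 0 := leadingCoeff_ne_zero.mpr hp0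
    set q : K[X] := p * C p.leadingCoeff⁻¹ with hq
    have hq0 : q ≠ 0 := by
      apply mul_ne_zero hp0
      simpa using inv_ne_zero hlc
    have hqdeg : q.natDegree = n := by rw [hq, natDegree_mul_C (inv_ne_zero hlc), hdeg]
    have hqn : q.coeff n = 1 := by
      rw [hq, coeff_mul_C, ← hdeg, coeff_natDegree, mul_inv_cancel₀ hlc]
    have hqeval : q.eval₂ ι u = 0 := by
      rw [hq, eval₂_mul, heval, zero_mul]
    -- the differentiated polynomial
    set r : K[X] := coeffDeriv δK q + derivative q * C a with hr
    have hreval : r.eval₂ ι u = 0 := by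
      rw [hr, eval₂_add, eval₂_mul, eval₂_C, ← hu,
        ← der_eval₂ ι u hKadd hMadd hMmul hcompat, hqeval, der_zero hMadd]
    have hrcoeff : ∀ N, r.coeff N = δK (q.coeff N) + q.coeff (N + 1) * (N + 1) * a := by
      intro N
      rw [hr, coeff_add, coeff_mul_C, coeffDeriv_coeff hKadd, coeff_derivative]
    have hrdeg : r.natDegree < n := by
      have : r.natDegree ≤ n - 1 := by
        rw [natDegree_le_iff_coeff_eq_zero]
        intro N hN
        have hNn : n ≤ N := by omega
        rw [hrcoeff]
        have h1 : q.coeff (N + 1) = 0 :=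
          coeff_eq_zero_of_natDegree_lt (by omega)
        rcases eq_or_lt_of_le hNn with hEq | hlt
        · subst hEq
          rw [hqn, der_one hKmul, h1, zero_mul, zero_mul, add_zero]
        · rw [coeff_eq_zero_of_natDegree_lt (by omega), der_zero hKadd, h1,
            zero_mul, zero_mul, add_zero]
      omega
    have hr0 : r = 0 := by
      by_contra hr0
      exact ih r.natDegree hrdeg r rfl hr0 hreval
    -- extract the contradiction from the coefficient at n - 1
    have hco : δK (q.coeff (n - 1)) + (n : K) * a = 0 := by
      have := hrcoeff (n - 1)
      rw [hr0, coeff_zero] at this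
      rw [show n - 1 + 1 = n by omega, hqn, one_mul] at this
      have hcast : ((n - 1 : ℕ) : K) + 1 = (n : K) := by
        push_cast [Nat.cast_sub hn1]
        ring
      rw [hcast] at this
      linear_combination -this
    apply hnotderiv
    refine ⟨-(q.coeff (n - 1)) / n, ?_⟩
    have hn : (n : K) ≠ 0 := Nat.cast_ne_zero.mpr (by omega)
    have hb : (n : K) * (-(q.coeff (n - 1)) / n) = -(q.coeff (n - 1)) := by
      field_simp
    have h1 := hKmul (n : K) (-(q.coeff (n - 1)) / n)
    rw [hb, der_natCast hKadd hKmul, der_neg hKadd] at h1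
    apply mul_left_cancel₀ hn
    linear_combination -h1 - hco

end Transcendence

section Comm

variable {M : Type*} [Field M]

/-- The subfield of elements where a ring endomorphism commutes with the derivation. -/
def derCommSubfield (δM : M → M)
    (hMadd : ∀ x y, δM (x + y) = δM x + δM y)
    (hMmul : ∀ x y, δM (x * y) = x * δM y + y * δM x)
    (σ : M →+* M) : Subfield M where
  carrier := {x | σ (δM x) = δM (σ x)}
  zero_mem' := by
    simp only [Set.mem_setOf_eq, der_zero hMadd, map_zero]
  one_mem' := by
    simp only [Set.mem_setOf_eq, der_one hMmul, map_zero, map_one, der_one hMmul]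
  add_mem' := by
    intro x y hx hy
    simp only [Set.mem_setOf_eq] at *
    rw [hMadd, map_add, map_add, hx, hy, hMadd]
  neg_mem' := by
    intro x hx
    simp only [Set.mem_setOf_eq] at *
    rw [der_neg hMadd, map_neg, map_neg, hx, der_neg hMadd]
  mul_mem' := by
    intro x y hx hy
    simp only [Set.mem_setOf_eq] at *
    rw [hMmul, map_add, map_mul, map_mul, map_mul, hx, hy, hMmul]
  inv_mem' := by
    intro x hx
    simp only [Set.mem_setOf_eq] at *
    rcases eq_or_ne x 0 with rfl | hx0
    · simp [der_zero hMadd]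
    · have hσx : σ x ≠ 0 := by
        simpa using (map_ne_zero σ).mpr hx0
      rw [der_inv hMadd hMmul x hx0, map_neg, map_mul, map_mul, map_inv₀, hx,
        der_inv hMadd hMmul (σ x) hσx]

theorem der_commutes_of_closure (δM : M → M)
    (hMadd : ∀ x y, δM (x + y) = δM x + δM y)
    (hMmul : ∀ x y, δM (x * y) = x * δM y + y * δM x)
    (σ : M →+* M) (S : Set M) (hS : Subfield.closure S = ⊤)
    (h : ∀ x ∈ S, σ (δM x) = δM (σ x)) (x : M) : σ (δM x) = δM (σ x) := by
  have hle : Subfield.closure S ≤ derCommSubfield δM hMadd hMmul σ :=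
    Subfield.closure_le.mpr h
  have : x ∈ derCommSubfield δM hMadd hMmul σ := by
    apply hle
    rw [hS]
    exact Subfield.mem_top x
  exact this

theorem ringEquiv_ext_of_closure {S : Set M} (hS : Subfield.closure S = ⊤)
    (σ τ : M ≃+* M) (h : ∀ x ∈ S, σ x = τ x) : σ = τ := by
  have : (σ : M →+* M) = (τ : M →+* M) :=
    RingHom.eq_of_eqOn_of_field_closure_eq_top hS h
  exact RingEquiv.ext fun x => RingHom.congr_fun this x

end Comm

section Galois

open Polynomial

theorem galois_iso
    {K M : Type*} [Field K] [CharZero K] [Field M]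
    (δK : K → K)
    (hKadd : ∀ x y, δK (x + y) = δK x + δK y)
    (hKmul : ∀ x y, δK (x * y) = x * δK y + y * δK x)
    (ι : K →+* M) (δM : M → M)
    (hMadd : ∀ x y, δM (x + y) = δM x + δM y)
    (hMmul : ∀ x y, δM (x * y) = x * δM y + y * δM x)
    (hcompat : ∀ c : K, δM (ι c) = ι (δK c))
    (a : K) (u : M)
    (hu : δM u = ι a)
    (hnotderiv : ¬∃ b : K, δK b = a)
    (hgen : Subfield.closure (Set.range ι ∪ {u}) = ⊤)
    (hconst : ∀ z : M, δM z = 0 → ∃ c : K, δK c = 0 ∧ ι c = z) :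
    Nonempty (diffGaloisGroup ι δM ≃* Multiplicative (constantsAddSubgroup δK hKadd)) := by
  classical
  -- Step 1: for each constant c, an isomorphism RatFunc K ≃+* M sending X to u + ι c
  have hE : ∀ c : K, δK c = 0 →
      ∃ e : RatFunc K ≃+* M, ∀ p : K[X],
        e (algebraMap K[X] (RatFunc K) p) = p.eval₂ ι (u + ι c) := by
    intro c hc
    have hu' : δM (u + ι c) = ι a := by
      rw [hMadd, hu, hcompat, hc, map_zero, add_zero]
    have htr := transcendental_of_not_deriv δK hKadd hKmul ι δM hMadd hMmul hcompat a
      (u + ι c) hu' hnotderiv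
    have hinj : Function.Injective (eval₂RingHom ι (u + ι c)) := by
      intro p q h
      by_contra hne
      refine htr (p - q) (sub_ne_zero.mpr hne) ?_
      have : (eval₂RingHom ι (u + ι c)) (p - q) = 0 := by rw [map_sub, h, sub_self]
      simpa using this
    have hΦalg : ∀ p : K[X],
        (IsFractionRing.lift (K := RatFunc K) hinj) (algebraMap K[X] (RatFunc K) p)
          = p.eval₂ ι (u + ι c) := fun p => IsFractionRing.lift_algebraMap hinj p
    have hsurj : Function.Surjective (IsFractionRing.lift (K := RatFunc K) hinj) := by
      have hle : Subfield.closure (Set.range ι ∪ {u}) ≤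
          (IsFractionRing.lift (K := RatFunc K) hinj).fieldRange := by
        apply Subfield.closure_le.mpr
        rintro x (⟨k, rfl⟩ | rfl)
        · exact ⟨algebraMap K[X] (RatFunc K) (C k), by rw [hΦalg, eval₂_C]⟩
        · refine ⟨algebraMap K[X] (RatFunc K) (X - C c), ?_⟩
          rw [hΦalg, eval₂_sub, eval₂_X, eval₂_C]
          ring
      intro x
      have hx : x ∈ (IsFractionRing.lift (K := RatFunc K) hinj).fieldRange :=
        hle (by rw [hgen]; exact Subfield.mem_top x)
      exact RingHom.mem_fieldRange.mp hx
    exact ⟨RingEquiv.ofBijective _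
      ⟨(IsFractionRing.lift (K := RatFunc K) hinj).injective, hsurj⟩, fun p => hΦalg p⟩
  choose E hEalg using hE
  have h0 : δK (0 : K) = 0 := der_zero hKadd
  -- the automorphism associated to a constant
  set σA : constantsAddSubgroup δK hKadd → RingAut M :=
    fun c => (E 0 h0).symm.trans (E c.1 c.2) with hσA
  have hsymmι : ∀ k : K, (E 0 h0).symm (ι k) = algebraMap K[X] (RatFunc K) (C k) := by
    intro k
    have : (E 0 h0) (algebraMap K[X] (RatFunc K) (C k)) = ι k := by
      rw [hEalg, eval₂_C]
    rw [← this, RingEquiv.symm_apply_apply]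
  have hsymmu : (E 0 h0).symm u = algebraMap K[X] (RatFunc K) X := by
    have : (E 0 h0) (algebraMap K[X] (RatFunc K) X) = u := by
      rw [hEalg, eval₂_X, map_zero, add_zero]
    rw [← this, RingEquiv.symm_apply_apply]
  have hσι : ∀ c k, σA c (ι k) = ι k := by
    intro c k
    show (E c.1 c.2) ((E 0 h0).symm (ι k)) = ι k
    rw [hsymmι]; exact (hEalg _ _ _).trans (eval₂_C _ _)
  have hσu : ∀ c, σA c u = u + ι c.1 := by
    intro c
    show (E c.1 c.2) ((E 0 h0).symm u) = u + ι c.1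
    rw [hsymmu]; exact (hEalg _ _ _).trans (eval₂_X _ _)
  -- membership in the differential Galois group
  have hmem : ∀ c, σA c ∈ diffGaloisGroup ι δM := by
    intro c
    refine ⟨hσι c, ?_⟩
    intro x
    refine der_commutes_of_closure δM hMadd hMmul ((σA c : M ≃+* M) : M →+* M)
      _ hgen ?_ x
    intro y hy
    rcases hy with ⟨k, rfl⟩ | hy
    · show σA c (δM (ι k)) = δM (σA c (ι k))
      rw [hcompat, hσι, hσι, hcompat]
    · rw [Set.mem_singleton_iff] at hy
      show σA c (δM y) = δM (σA c y)
      rw [hy, hu, hσι c a, hσu, hMadd, hu, hcompat, c.2, map_zero, add_zero]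
  -- uniqueness of automorphisms by their values on the generators
  have huniq : ∀ σ τ : RingAut M, (∀ k, σ (ι k) = τ (ι k)) → σ u = τ u → σ = τ := by
    intro σ τ h1 h2
    apply ringEquiv_ext_of_closure hgen
    rintro x (⟨k, rfl⟩ | rfl)
    · exact h1 k
    · exact h2
  -- the group homomorphism
  set ψ : Multiplicative (constantsAddSubgroup δK hKadd) →* diffGaloisGroup ι δM :=
    { toFun := fun c => ⟨σA c.toAdd, hmem c.toAdd⟩
      map_one' := by
        apply Subtype.ext
        show σA 0 = 1
        apply huniq
        · intro k; rw [hσι]; rfl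
        · rw [hσu]
          show u + ι ((0 : constantsAddSubgroup δK hKadd) : K) = (1 : RingAut M) u
          simp
      map_mul' := by
        intro c d
        apply Subtype.ext
        show σA (c.toAdd + d.toAdd) = σA c.toAdd * σA d.toAdd
        apply huniq
        · intro k
          show _ = σA c.toAdd (σA d.toAdd (ι k))
          rw [hσι, hσι, hσι]
        · show σA (c.toAdd + d.toAdd) u = σA c.toAdd (σA d.toAdd u)
          rw [hσu, hσu, map_add, hσι, hσu]
          push_cast
          rw [map_add]
          ring } with hψ
  have hinj : Function.Injective ψ := by
    intro c d h
    have h1 := congrArg (fun g : diffGaloisGroup ι δM => (g : RingAut M) u) h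
    simp only [hψ, MonoidHom.coe_mk, OneHom.coe_mk] at h1
    rw [hσu, hσu] at h1
    have h2 : (c.toAdd : K) = (d.toAdd : K) := ι.injective (by linear_combination h1)
    exact Multiplicative.toAdd.injective (Subtype.ext h2)
  have hsurj : Function.Surjective ψ := by
    rintro ⟨σ, hσ⟩
    obtain ⟨hfix, hcomm⟩ := hσ
    have hz : δM (σ u - u) = 0 := by
      rw [der_sub hMadd, ← hcomm u, hu, hfix a, sub_self]
    obtain ⟨c, hc, hcval⟩ := hconst _ hz
    refine ⟨Multiplicative.ofAdd ⟨c, hc⟩, ?_⟩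
    apply Subtype.ext
    show σA ⟨c, hc⟩ = σ
    apply huniq
    · intro k
      rw [hσι, hfix]
    · rw [hσu]
      show u + ι c = σ u
      rw [hcval]
      ring
  exact ⟨(MulEquiv.ofBijective ψ ⟨hinj, hsurj⟩).symm⟩

end Galois

/-- Let `K` be a differential field of characteristic zero with field of
constants `C`, and let `u` be an element of a differential field extension `M` of `K`
with `u' = a ∈ K`, where `a` is not a derivative in `K`. Then `u` is transcendental over
`K`; moreover if `M = K(u)` has the same field of constants as `K`, then the differential
Galois group of `K(u)/K` is isomorphic to the additive group `(C, +)` of constants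
of `K`. -/
theorem adjoin_integral_transcendental_and_galois_group_eq_additive_constants
    {K M : Type*} [Field K] [CharZero K] [Field M]
    (δK : K → K)
    (hKadd : ∀ x y, δK (x + y) = δK x + δK y)
    (hKmul : ∀ x y, δK (x * y) = x * δK y + y * δK x)
    (ι : K →+* M) (δM : M → M)
    (hMadd : ∀ x y, δM (x + y) = δM x + δM y)
    (hMmul : ∀ x y, δM (x * y) = x * δM y + y * δM x)
    (hcompat : ∀ c : K, δM (ι c) = ι (δK c))
    (a : K) (u : M)
    (hu : δM u = ι a)
    (hnotderiv : ¬∃ b : K, δK b = a)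
    (hgen : Subfield.closure (Set.range ι ∪ {u}) = ⊤) :
    (∀ p : Polynomial K, p ≠ 0 → Polynomial.eval₂ ι u p ≠ 0) ∧
    ((∀ z : M, δM z = 0 → ∃ c : K, δK c = 0 ∧ ι c = z) →
      Nonempty (diffGaloisGroup ι δM ≃* Multiplicative (constantsAddSubgroup δK hKadd))) := by
  constructor
  · exact transcendental_of_not_deriv δK hKadd hKmul ι δM hMadd hMmul hcompat a u hu hnotderiv
  · intro hconst
    exact galois_iso δK hKadd hKmul ι δM hMadd hMmul hcompat a u hu hnotderiv hgen hconst
end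

section
/- Let K be a differential field of characteristic zero with field of constants C, let a ∈ K, and let u ≠ 0 be an element of a differential field extension of K satisfying u' = a u; assume K(u) has the same field of constants as K. Suppose n ≥ 1 is the least positive integer such that the equation y' = n a y has a nonzero solution β ∈ K. Then u is algebraic over K, its minimal polynomial over K is X^n − cβ for some nonzero constant c, and the differential Galois group of K(u)/K is isomorphic to the group of n-th roots of unity in C. -/
/-- The group of `n`-th roots of unity lying in the field of constants `C` of a
differential field `(K, δ)`, as a subgroup of `Kˣ`. -/
def rootsOfUnityConstants {K : Type*} [Field K] (δ : K → K)
    (hadd : ∀ x y, δ (x + y) = δ x + δ y)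
    (hmul : ∀ x y, δ (x * y) = x * δ y + y * δ x) (n : ℕ) : Subgroup Kˣ where
  carrier := {x | δ (x : K) = 0 ∧ (x : K) ^ n = 1}
  one_mem' := by
    constructor
    · show δ ((1 : Kˣ) : K) = 0
      rw [Units.val_one]
      have h := hmul 1 1
      rw [mul_one, one_mul] at h
      exact left_eq_add.mp h
    · rw [Units.val_one, one_pow]
  mul_mem' := by
    rintro a b ⟨ha, ha'⟩ ⟨hb, hb'⟩
    constructor
    · show δ ((a * b : Kˣ) : K) = 0
      rw [Units.val_mul, hmul, ha, hb, mul_zero, mul_zero, add_zero]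
    · rw [Units.val_mul, mul_pow, ha', hb', mul_one]
  inv_mem' := by
    rintro a ⟨ha, ha'⟩
    constructor
    · show δ ((a⁻¹ : Kˣ) : K) = 0
      have h1 : δ (1 : K) = 0 := by
        have h := hmul 1 1
        rw [mul_one, one_mul] at h
        exact left_eq_add.mp h
      have h := hmul (a : K) ((a⁻¹ : Kˣ) : K)
      rw [Units.mul_inv, h1, ha, mul_zero, add_zero] at h
      exact (mul_eq_zero.mp h.symm).resolve_left (Units.ne_zero a)
    · rw [Units.val_inv_eq_inv_val, inv_pow, ha', inv_one]

set_option maxHeartbeats 1600000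

/-- Let `K` be a differential field of characteristic zero, `a ∈ K`, and
`u ≠ 0` an element of a differential field extension `M = K(u)` of `K` with `u' = a u`
and the same field of constants as `K`. Suppose `n ≥ 1` is the least positive integer
such that `y' = n a y` has a nonzero solution `β ∈ K`. Then `u` is algebraic over `K`,
its minimal polynomial over `K` is `X ^ n - C (c * β)` for some nonzero constant `c`,
and the differential Galois group of `K(u)/K` is isomorphic to the group of `n`-th
roots of unity in the constants of `K`. -/
theorem adjoin_exponential_algebraic_galois_group_eq_rootsOfUnity
    {K M : Type*} [Field K] [CharZero K] [Field M]
    (δK : K → K)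
    (hKadd : ∀ x y, δK (x + y) = δK x + δK y)
    (hKmul : ∀ x y, δK (x * y) = x * δK y + y * δK x)
    (ι : K →+* M) (δM : M → M)
    (hMadd : ∀ x y, δM (x + y) = δM x + δM y)
    (hMmul : ∀ x y, δM (x * y) = x * δM y + y * δM x)
    (hcompat : ∀ c : K, δM (ι c) = ι (δK c))
    (a : K) (u : M) (hu0 : u ≠ 0)
    (hu : δM u = ι a * u)
    (hgen : Subfield.closure (Set.range ι ∪ {u}) = ⊤)
    (hconst : ∀ z : M, δM z = 0 → ∃ c : K, δK c = 0 ∧ ι c = z)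
    (n : ℕ) (hn : 1 ≤ n) (β : K) (hβ0 : β ≠ 0) (hβ : δK β = (n : K) * a * β)
    (hleast : ∀ m : ℕ, 1 ≤ m → m < n → ∀ γ : K, δK γ = (m : K) * a * γ → γ = 0) :
    (∃ c : K, δK c = 0 ∧ c ≠ 0 ∧
      u ^ n = ι (c * β) ∧
      (∀ p : Polynomial K, p ≠ 0 → Polynomial.eval₂ ι u p = 0 →
        (Polynomial.X ^ n - Polynomial.C (c * β)) ∣ p)) ∧
    Nonempty (diffGaloisGroup ι δM ≃* rootsOfUnityConstants δK hKadd hKmul n) := by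
  classical
  letI : Algebra K M := ι.toAlgebra
  have halg : algebraMap K M = ι := rfl
  have hinj : Function.Injective ι := ι.injective
  -- basic derivation facts
  have hδM0 : δM 0 = 0 := by
    have h := hMadd 0 0
    rw [add_zero] at h
    exact left_eq_add.mp h
  have hδM1 : δM 1 = 0 := by
    have h := hMmul 1 1
    rw [mul_one, one_mul] at h
    exact left_eq_add.mp h
  have hδK1 : δK 1 = 0 := by
    have h := hKmul 1 1
    rw [mul_one, one_mul] at h
    exact left_eq_add.mp h
  have hδMinv : ∀ x : M, x ≠ 0 → δM x⁻¹ = -(δM x) * (x⁻¹ * x⁻¹) := by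
    intro x hx
    have h := hMmul x x⁻¹
    rw [mul_inv_cancel₀ hx, hδM1] at h
    have h2 : x * δM x⁻¹ = -(x⁻¹ * δM x) := by linear_combination -h
    calc δM x⁻¹ = x⁻¹ * (x * δM x⁻¹) := by rw [← mul_assoc, inv_mul_cancel₀ hx, one_mul]
      _ = x⁻¹ * (-(x⁻¹ * δM x)) := by rw [h2]
      _ = -(δM x) * (x⁻¹ * x⁻¹) := by ring
  have hδMsum : ∀ (s : Finset ℕ) (f : ℕ → M), δM (∑ i ∈ s, f i) = ∑ i ∈ s, δM (f i) := by
    intro s f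
    induction s using Finset.induction_on with
    | empty => simpa using hδM0
    | @insert _ _ hx ih => rw [Finset.sum_insert hx, Finset.sum_insert hx, hMadd, ih]
  have hδupow : ∀ i : ℕ, δM (u ^ i) = (i : M) * ι a * u ^ i := by
    intro i
    induction i with
    | zero => simpa using hδM1
    | succ k ih =>
      rw [pow_succ, hMmul, ih, hu]
      push_cast
      ring
  -- the constant c
  have hιβ : ι β ≠ 0 := fun h => hβ0 (hinj (by rw [h, map_zero]))
  have hw : δM (u ^ n * (ι β)⁻¹) = 0 := by
    rw [hMmul, hδMinv _ hιβ, hδupow, hcompat, hβ, map_mul, map_mul, map_natCast]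
    field_simp
    ring
  obtain ⟨c, hc0, hc⟩ := hconst _ hw
  have hcne : c ≠ 0 := by
    intro h
    rw [h, map_zero] at hc
    have h2 : u ^ n = 0 := by
      rcases mul_eq_zero.mp hc.symm with h' | h'
      · exact h'
      · exact absurd h' (inv_ne_zero hιβ)
    exact hu0 ((pow_eq_zero_iff (by omega)).mp h2)
  have hun : u ^ n = ι (c * β) := by
    rw [map_mul, hc]
    field_simp
  -- minimal polynomial
  have hn0 : n ≠ 0 := by omega
  have hqmonic : (Polynomial.X ^ n - Polynomial.C (c * β)).Monic :=
    Polynomial.monic_X_pow_sub_C _ hn0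
  have hq0 : (Polynomial.X ^ n - Polynomial.C (c * β)) ≠ 0 := hqmonic.ne_zero
  have hqdeg : (Polynomial.X ^ n - Polynomial.C (c * β)).natDegree = n :=
    Polynomial.natDegree_X_pow_sub_C
  have hqeval : (Polynomial.aeval u) (Polynomial.X ^ n - Polynomial.C (c * β)) = 0 := by
    rw [map_sub, map_pow, Polynomial.aeval_X, Polynomial.aeval_C, halg, hun, sub_self]
  have hint : IsIntegral K u := ⟨_, hqmonic, by rw [← Polynomial.aeval_def]; exact hqeval⟩
  have hm0 : minpoly K u ≠ 0 := minpoly.ne_zero hint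
  have hmonic : (minpoly K u).Monic := minpoly.monic hint
  have hmdvd : minpoly K u ∣ (Polynomial.X ^ n - Polynomial.C (c * β)) := minpoly.dvd K u hqeval
  have hdle : (minpoly K u).natDegree ≤ n := by
    have h := Polynomial.natDegree_le_of_dvd hmdvd hq0
    rwa [hqdeg] at h
  have hdpos : 0 < (minpoly K u).natDegree := minpoly.natDegree_pos hint
  have hmeval : ∑ i ∈ Finset.range ((minpoly K u).natDegree + 1),
      ι ((minpoly K u).coeff i) * u ^ i = 0 := by
    have h := minpoly.aeval K u
    rw [Polynomial.aeval_def, halg,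
      Polynomial.eval₂_eq_sum_range' ι (lt_add_one (minpoly K u).natDegree) u] at h
    exact h
  have hdn : (minpoly K u).natDegree = n := by
    set d : ℕ := (minpoly K u).natDegree with hddef
    by_contra hne
    have hdlt : d < n := lt_of_le_of_ne hdle hne
    have hD : ∑ i ∈ Finset.range (d + 1),
        ι (δK ((minpoly K u).coeff i) + (i : K) * a * (minpoly K u).coeff i) * u ^ i = 0 := by
      have h1 := congrArg δM hmeval
      rw [hδMsum, hδM0] at h1
      rw [← h1]
      apply Finset.sum_congr rfl
      intro i _
      rw [hMmul, hδupow, hcompat, map_add, map_mul, map_mul, map_natCast]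
      ring
    set g : ℕ → K := fun i =>
      δK ((minpoly K u).coeff i) + (i : K) * a * (minpoly K u).coeff i
        - (d : K) * a * (minpoly K u).coeff i with hg
    set s : Polynomial K := ∑ i ∈ Finset.range (d + 1), Polynomial.C (g i) * Polynomial.X ^ i
      with hs
    have hseval : (Polynomial.aeval u) s = 0 := by
      have heq : (Polynomial.aeval u) s = ∑ i ∈ Finset.range (d + 1), ι (g i) * u ^ i := by
        rw [hs, map_sum]
        apply Finset.sum_congr rfl
        intro i _
        rw [map_mul, map_pow, Polynomial.aeval_C, Polynomial.aeval_X, halg]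
      rw [heq]
      have hsplit : ∀ i ∈ Finset.range (d + 1), ι (g i) * u ^ i =
          ι (δK ((minpoly K u).coeff i) + (i : K) * a * (minpoly K u).coeff i) * u ^ i
            - ι ((d : K) * a) * (ι ((minpoly K u).coeff i) * u ^ i) := by
        intro i _
        rw [hg]
        simp only [map_sub, map_add, map_mul, map_natCast]
        ring
      rw [Finset.sum_congr rfl hsplit, Finset.sum_sub_distrib, hD, ← Finset.mul_sum, hmeval,
        mul_zero, sub_zero]
    have hcoeff : ∀ j, j ≤ d → s.coeff j = g j := by
      intro j hj
      rw [hs, Polynomial.finset_sum_coeff]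
      have hterm : ∀ i ∈ Finset.range (d + 1),
          (Polynomial.C (g i) * Polynomial.X ^ i).coeff j = if i = j then g i else 0 := by
        intro i _
        rw [Polynomial.coeff_C_mul, Polynomial.coeff_X_pow]
        by_cases h : i = j
        · simp [h]
        · rw [if_neg (fun hh : j = i => h hh.symm), if_neg h, mul_zero]
      rw [Finset.sum_congr rfl hterm, Finset.sum_ite_eq' (Finset.range (d + 1)) j g]
      simp [Nat.lt_succ_of_le hj]
    have hcd1 : (minpoly K u).coeff d = 1 := hmonic.coeff_natDegree
    have hsd : s.coeff d = 0 := by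
      rw [hcoeff d le_rfl, hg]
      simp [hcd1, hδK1]
    have hsle : s.natDegree ≤ d := by
      rw [hs]
      refine Polynomial.natDegree_sum_le_of_forall_le _ _ ?_
      intro i hi
      exact le_trans (Polynomial.natDegree_C_mul_X_pow_le _ _)
        (Nat.lt_succ_iff.mp (Finset.mem_range.mp hi))
    have hs0 : s = 0 := by
      by_contra hs0
      have hd1 : d ≤ s.natDegree :=
        Polynomial.natDegree_le_of_dvd (minpoly.dvd K u hseval) hs0
      have hd2 : s.natDegree = d := le_antisymm hsle hd1
      exact (Polynomial.leadingCoeff_ne_zero.mpr hs0)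
        (by rw [Polynomial.leadingCoeff, hd2, hsd])
    have hgz : ∀ i, i < d → δK ((minpoly K u).coeff i)
        = ((d - i : ℕ) : K) * a * (minpoly K u).coeff i := by
      intro i hi
      have h1 := hcoeff i (le_of_lt hi)
      rw [hs0, Polynomial.coeff_zero] at h1
      have hgi : g i = 0 := h1.symm
      rw [hg] at hgi
      rw [Nat.cast_sub hi.le]
      linear_combination hgi
    by_cases hall : ∀ i, i < d → (minpoly K u).coeff i = 0
    · have h1 := hmeval
      rw [Finset.sum_range_succ] at h1
      have hz : ∑ i ∈ Finset.range d, ι ((minpoly K u).coeff i) * u ^ i = 0 :=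
        Finset.sum_eq_zero fun i hi => by
          rw [hall i (Finset.mem_range.mp hi), map_zero, zero_mul]
      rw [hz, zero_add, hcd1, map_one, one_mul] at h1
      exact hu0 ((pow_eq_zero_iff (by omega)).mp h1)
    · push_neg at hall
      obtain ⟨i, hi, hci⟩ := hall
      exact hci (hleast (d - i) (by omega) (by omega) _ (hgz i hi))
  have hmq : minpoly K u = Polynomial.X ^ n - Polynomial.C (c * β) := by
    obtain ⟨r, hr⟩ := hmdvd
    have hr0 : r ≠ 0 := by
      rintro rfl
      rw [mul_zero] at hr
      exact hq0 hr
    have hrd : r.natDegree = 0 := by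
      have h1 : (Polynomial.X ^ n - Polynomial.C (c * β)).natDegree
          = (minpoly K u).natDegree + r.natDegree := by
        rw [hr, Polynomial.natDegree_mul hm0 hr0]
      rw [hqdeg, hdn] at h1
      omega
    have hrC : r = Polynomial.C (r.coeff 0) := Polynomial.eq_C_of_natDegree_eq_zero hrd
    have hlc : r.coeff 0 = 1 := by
      have h1 : (Polynomial.X ^ n - Polynomial.C (c * β)).leadingCoeff
          = (minpoly K u).leadingCoeff * r.leadingCoeff := by
        rw [hr, Polynomial.leadingCoeff_mul]
      rw [hqmonic.leadingCoeff, hmonic.leadingCoeff, one_mul] at h1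
      rw [Polynomial.leadingCoeff, hrd] at h1
      exact h1.symm
    rw [hr, hrC, hlc, Polynomial.C_1, mul_one]
  -- first conjunct
  refine ⟨⟨c, hc0, hcne, hun, fun p _ hpe => ?_⟩, ?_⟩
  · rw [← hmq]
    exact minpoly.dvd K u (by rw [Polynomial.aeval_def, halg]; exact hpe)
  -- Galois group part
  have hF : IntermediateField.adjoin K {u} = ⊤ := by
    rw [eq_top_iff]
    intro x _
    have hle : Subfield.closure (Set.range ι ∪ {u})
        ≤ (IntermediateField.adjoin K {u}).toSubfield := by
      refine Subfield.closure_le.mpr ?_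
      rintro y (⟨ca, rfl⟩ | hy)
      · exact (IntermediateField.mem_toSubfield _ _).mpr
          ((IntermediateField.adjoin K {u}).algebraMap_mem ca)
      · exact (IntermediateField.mem_toSubfield _ _).mpr
          (IntermediateField.subset_adjoin K _ hy)
    exact (IntermediateField.mem_toSubfield _ _).mp (hle (by rw [hgen]; exact Subfield.mem_top x))
  haveI hFDadj : FiniteDimensional K (IntermediateField.adjoin K {u}) :=
    IntermediateField.adjoin.finiteDimensional hint
  let e : (IntermediateField.adjoin K {u}) ≃ₐ[K] M :=
    (IntermediateField.equivOfEq hF).trans IntermediateField.topEquiv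
  haveI hFD : FiniteDimensional K M := Module.Finite.equiv e.toLinearEquiv
  -- building an automorphism from a root of unity
  have hbuild : ∀ ζ : K, δK ζ = 0 → ζ ^ n = 1 →
      ∃ σ : RingAut M, σ ∈ diffGaloisGroup ι δM ∧ σ u = ι ζ * u := by
    intro ζ hζ0 hζn
    have hroot : (Polynomial.aeval (ι ζ * u)) (minpoly K u) = 0 := by
      rw [hmq, map_sub, map_pow, Polynomial.aeval_X, Polynomial.aeval_C, halg, mul_pow,
        ← map_pow, hζn, map_one, one_mul, hun, sub_self]
    have hgenpb : (Polynomial.aeval (ι ζ * u))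
        (minpoly K (IntermediateField.adjoin.powerBasis hint).gen) = 0 := by
      rw [IntermediateField.adjoin.powerBasis_gen, IntermediateField.minpoly_gen]
      exact hroot
    let φ : (IntermediateField.adjoin K {u}) →ₐ[K] M :=
      (IntermediateField.adjoin.powerBasis hint).lift (ι ζ * u) hgenpb
    let ψ : M →ₐ[K] M := φ.comp e.symm.toAlgHom
    have hψu : ψ u = ι ζ * u := by
      have h1 : e.symm u = (IntermediateField.adjoin.powerBasis hint).gen := by
        apply e.injective
        rw [AlgEquiv.apply_symm_apply, IntermediateField.adjoin.powerBasis_gen]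
        rfl
      show φ (e.symm u) = ι ζ * u
      rw [h1]
      exact PowerBasis.lift_gen _ _ _
    have hψinj : Function.Injective ψ := ψ.toRingHom.injective
    have hψsurj : Function.Surjective ψ :=
      (LinearMap.injective_iff_surjective (f := ψ.toLinearMap)).mp hψinj
    let σA : M ≃ₐ[K] M := AlgEquiv.ofBijective ψ ⟨hψinj, hψsurj⟩
    have hσAu : σA u = ι ζ * u := hψu
    have hσAfix : ∀ ca : K, σA (ι ca) = ι ca := fun ca => σA.commutes ca
    have hσAcomm : ∀ x : M, σA (δM x) = δM (σA x) := by
      let S : Subfield M :=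
        { carrier := {x | σA (δM x) = δM (σA x)}
          zero_mem' := by simp [hδM0]
          one_mem' := by simp [hδM1]
          add_mem' := by
            intro x y hx hy
            simp only [Set.mem_setOf_eq] at hx hy ⊢
            rw [hMadd, map_add, hx, hy, map_add, hMadd]
          mul_mem' := by
            intro x y hx hy
            simp only [Set.mem_setOf_eq] at hx hy ⊢
            rw [hMmul, map_add, map_mul, map_mul, hx, hy, map_mul, hMmul]
          neg_mem' := by
            intro x hx
            simp only [Set.mem_setOf_eq] at hx ⊢
            have hnx : δM (-x) = -δM x := by
              have h := hMadd x (-x)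
              rw [add_neg_cancel, hδM0] at h
              linear_combination -h
            have hnsx : δM (-(σA x)) = -δM (σA x) := by
              have h := hMadd (σA x) (-(σA x))
              rw [add_neg_cancel, hδM0] at h
              linear_combination -h
            rw [hnx, map_neg, hx, map_neg, hnsx]
          inv_mem' := by
            intro x hx
            simp only [Set.mem_setOf_eq] at hx ⊢
            by_cases h0 : x = 0
            · simp [h0, hδM0]
            · have hs0 : σA x ≠ 0 := fun h => h0 (σA.injective (by rw [h, map_zero]))
              rw [hδMinv x h0, map_mul, map_mul, map_neg, hx, map_inv₀]
              exact (hδMinv _ hs0).symm }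
      have hle : Subfield.closure (Set.range ι ∪ {u}) ≤ S := by
        refine Subfield.closure_le.mpr ?_
        rintro y (⟨ca, rfl⟩ | hy)
        · show σA (δM (ι ca)) = δM (σA (ι ca))
          rw [hcompat, hσAfix, hσAfix, hcompat]
        · rw [Set.mem_singleton_iff.mp hy]
          show σA (δM u) = δM (σA u)
          rw [hu, map_mul, hσAfix, hσAu, hMmul, hu, hcompat, hζ0, map_zero]
          ring
      intro x
      exact hle (by rw [hgen]; exact Subfield.mem_top x)
    exact ⟨σA.toRingEquiv, ⟨hσAfix, hσAcomm⟩, hσAu⟩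
  -- the map from the Galois group to roots of unity
  have hkey : ∀ σ : diffGaloisGroup ι δM, δM ((σ : RingAut M) u * u⁻¹) = 0 := by
    rintro ⟨σ, h1, h2⟩
    show δM (σ u * u⁻¹) = 0
    rw [hMmul, hδMinv u hu0, ← h2, hu, map_mul, h1]
    field_simp
    ring
  have hexz : ∀ σ : diffGaloisGroup ι δM,
      ∃ z : K, δK z = 0 ∧ ι z = (σ : RingAut M) u * u⁻¹ :=
    fun σ => hconst _ (hkey σ)
  choose Z hZ0 hZι using hexz
  have hZu : ∀ σ : diffGaloisGroup ι δM, (σ : RingAut M) u = ι (Z σ) * u := by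
    intro σ
    rw [hZι σ]
    field_simp
  have hZne : ∀ σ : diffGaloisGroup ι δM, Z σ ≠ 0 := by
    intro σ h
    have h1 := hZu σ
    rw [h, map_zero, zero_mul] at h1
    exact hu0 ((σ : RingAut M).injective (h1.trans (map_zero (σ : RingAut M)).symm))
  have hfix : ∀ σ : diffGaloisGroup ι δM, ∀ ca : K, (σ : RingAut M) (ι ca) = ι ca :=
    fun σ => σ.2.1
  have hZpow : ∀ σ : diffGaloisGroup ι δM, Z σ ^ n = 1 := by
    intro σ
    apply hinj
    rw [map_pow, hZι σ, map_one, mul_pow, ← map_pow, inv_pow, hun, hfix σ]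
    exact mul_inv_cancel₀ (by rw [← hun]; exact pow_ne_zero _ hu0)
  let Ψ : diffGaloisGroup ι δM →* rootsOfUnityConstants δK hKadd hKmul n :=
    { toFun := fun σ => ⟨Units.mk0 (Z σ) (hZne σ), ⟨hZ0 σ, hZpow σ⟩⟩
      map_one' := by
        refine Subtype.ext (Units.ext ?_)
        show Z 1 = 1
        apply hinj
        rw [hZι 1, map_one]
        show (1 : RingAut M) u * u⁻¹ = 1
        exact mul_inv_cancel₀ hu0
      map_mul' := by
        intro σ τ
        refine Subtype.ext (Units.ext ?_)
        show Z (σ * τ) = Z σ * Z τ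
        apply hinj
        rw [hZι (σ * τ), map_mul]
        have h1 : ((σ * τ : diffGaloisGroup ι δM) : RingAut M) u
            = (σ : RingAut M) ((τ : RingAut M) u) := rfl
        rw [h1, hZu τ, map_mul, hfix σ, hZu σ, hZι σ, hZι τ]
        field_simp }
  have hΨinj : Function.Injective Ψ := by
    refine (injective_iff_map_eq_one Ψ).mpr ?_
    intro σ hσ1
    have hZ1 : Z σ = 1 := by
      have h : ((Ψ σ : Kˣ) : K) = 1 := by rw [hσ1]; rfl
      exact h
    have hσu : (σ : RingAut M) u = u := by rw [hZu σ, hZ1, map_one, one_mul]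
    refine Subtype.ext (RingEquiv.ext fun x => ?_)
    have hle : Subfield.closure (Set.range ι ∪ {u})
        ≤ RingHom.eqLocusField ((σ : RingAut M) : M →+* M) (RingHom.id M) := by
      refine Subfield.closure_le.mpr ?_
      rintro y (⟨ca, rfl⟩ | hy)
      · exact hfix σ ca
      · rw [Set.mem_singleton_iff.mp hy]
        exact hσu
    exact hle (by rw [hgen]; exact Subfield.mem_top x)
  have hΨsurj : Function.Surjective Ψ := by
    rintro ⟨ζu, hζ0, hζn⟩
    obtain ⟨σ, hσmem, hσu⟩ := hbuild (ζu : K) hζ0 hζn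
    refine ⟨⟨σ, hσmem⟩, ?_⟩
    refine Subtype.ext (Units.ext ?_)
    show Z ⟨σ, hσmem⟩ = (ζu : K)
    apply hinj
    rw [hZι ⟨σ, hσmem⟩]
    show σ u * u⁻¹ = ι ζu
    rw [hσu]
    field_simp
  exact ⟨MulEquiv.ofBijective Ψ ⟨hΨinj, hΨsurj⟩⟩
end
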